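/- arXiv:1507.03161 — 4 statements merged into one kernel-verified Lean document; each statement's English description precedes it below -/
import Mathlib

section
/- The ℤ/2-linear map Λ_n^q → Λ_n^{q+2}, x ↦ R²·x, is injective for 0 ≤ q ≤ m−3 and surjective for m−1 ≤ q ≤ 2m−4. -/
open CategoryTheory AlgebraicTopology Finset

noncomputable section

/-- The singular chain complex functor with coefficients in a commutative ring `R`:
the free `R`-module functor applied levelwise to the singular simplicial set, followed by
the alternating face map complex. -/
def singularChainComplex (R : Type) [CommRing R] : TopCat ⥤ ChainComplex (ModuleCat R) ℕ :=
  TopCat.toSSet ⋙ ((SimplicialObject.whiskering _ _).obj (ModuleCat.free R)) ⋙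
    alternatingFaceMapComplex _

/-- Singular homology with coefficients in `R`, as a functor `TopCat ⥤ ModuleCat R`. -/
def SH (R : Type) [CommRing R] (q : ℕ) : TopCat ⥤ ModuleCat R :=
  singularChainComplex R ⋙ HomologicalComplex.homologyFunctor _ _ q

/-- View a morphism of `ModuleCat R` as a linear map. -/
def homToLinear {R : Type} [CommRing R] {M N : ModuleCat R} (f : M ⟶ N) : M →ₗ[R] N where
  toFun := f
  map_add' := map_add f.hom
  map_smul' := map_smul f.hom

/-- The polynomial ring `(ℤ/2)[R, V_1, …, V_{n-1}]` for `n = 2m+1`; the variable `none`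
is `R` and the variable `some i` is `V_{i+1}`. -/
abbrev PolyRing (m : ℕ) := MvPolynomial (Option (Fin (2*m))) (ZMod 2)

/-- The relations (R1): `V_i² + R·V_i`. -/
def rel1 (m : ℕ) : Set (PolyRing m) :=
  Set.range fun i : Fin (2*m) =>
    (MvPolynomial.X (some i))^2 + MvPolynomial.X none * MvPolynomial.X (some i)

/-- The relations (R2): `∏_{i∈S} V_i` for `|S| ≥ m`. -/
def rel2 (m : ℕ) : Set (PolyRing m) :=
  {p | ∃ S : Finset (Fin (2*m)), m ≤ S.card ∧ p = ∏ i ∈ S, MvPolynomial.X (some i)}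

/-- The relations (R3): `∑_{S⊆L} R^{|L∖S|-1} ∏_{i∈S} V_i` for `|L| ≥ m+1`. -/
def rel3 (m : ℕ) : Set (PolyRing m) :=
  {p | ∃ L : Finset (Fin (2*m)), m+1 ≤ L.card ∧
    p = ∑ S ∈ L.powerset,
      (MvPolynomial.X none)^(L.card - S.card - 1) * ∏ i ∈ S, MvPolynomial.X (some i)}

/-- The ideal `𝓘_n` generated by the relations (R1), (R2), (R3). -/
def idealI (m : ℕ) : Ideal (PolyRing m) := Ideal.span (rel1 m ∪ rel2 m ∪ rel3 m)

/-- The ring `Λ_n = (ℤ/2)[R, V_1, …, V_{n-1}]/𝓘_n`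
(isomorphic to `H^*(M_n/τ; ℤ/2)` by Hausmann–Knutson). -/
abbrev LambdaRing (m : ℕ) := PolyRing m ⧸ idealI m

/-- The degree-`q` homogeneous component `Λ_n^q` of `Λ_n`, i.e. the image in the quotient of
the homogeneous polynomials of degree `q`. -/
def LambdaComp (m q : ℕ) : Submodule (ZMod 2) (LambdaRing m) :=
  (MvPolynomial.homogeneousSubmodule (Option (Fin (2*m))) (ZMod 2) q).map
    (Ideal.Quotient.mkₐ (ZMod 2) (idealI m)).toLinearMap

/-- Multiplication by `R²` on `Λ_n`, as a `ℤ/2`-linear map. -/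
def mulR2 (m : ℕ) : LambdaRing m →ₗ[ZMod 2] LambdaRing m :=
  LinearMap.mulLeft (ZMod 2)
    ((Ideal.Quotient.mkₐ (ZMod 2) (idealI m)) ((MvPolynomial.X none)^2))

namespace HK8

open MvPolynomial

variable {m : ℕ}

/-- V-support of an exponent vector. -/
def sf (f : Option (Fin (2*m)) →₀ ℕ) : Finset (Fin (2*m)) :=
  Finset.univ.filter fun i => f (some i) ≠ 0

lemma mem_sf {f : Option (Fin (2*m)) →₀ ℕ} {i : Fin (2*m)} :
    i ∈ sf f ↔ f (some i) ≠ 0 := by simp [sf]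

lemma degree_split (f : Option (Fin (2*m)) →₀ ℕ) :
    f.degree = f none + ∑ i ∈ sf f, f (some i) := by
  have h1 : f.degree = ∑ v ∈ Finset.univ, f v :=
    Finset.sum_subset (Finset.subset_univ _) (fun v _ hv => Finsupp.notMem_support_iff.mp hv)
  rw [h1, Fintype.sum_option]
  congr 1
  refine (Finset.sum_subset (Finset.subset_univ _) ?_).symm
  intro i _ hi
  exact not_not.mp fun h => hi (mem_sf.mpr h)

lemma sf_card_le_degree (f : Option (Fin (2*m)) →₀ ℕ) : (sf f).card ≤ f.degree := by
  rw [degree_split f]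
  calc (sf f).card = ∑ i ∈ sf f, 1 := by simp
  _ ≤ ∑ i ∈ sf f, f (some i) :=
      Finset.sum_le_sum (fun i hi => Nat.one_le_iff_ne_zero.mpr (mem_sf.mp hi))
  _ ≤ _ := Nat.le_add_left _ _

/-- The subideal generated by (R1) and (R2) only. -/
def J (m : ℕ) : Ideal (PolyRing m) := Ideal.span (rel1 m ∪ rel2 m)

lemma J_le_idealI : J m ≤ idealI m :=
  Ideal.span_mono (Set.subset_union_left)

lemma add_self_eq_zero' (x : PolyRing m) : x + x = 0 := by
  have h2 : (2 : PolyRing m) = 0 := by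
    have : ((1 : ZMod 2) + 1) = 0 := by decide
    calc (2 : PolyRing m) = MvPolynomial.C 1 + MvPolynomial.C 1 := by
          rw [MvPolynomial.C_1]; ring
    _ = MvPolynomial.C ((1:ZMod 2) + 1) := by rw [map_add]
    _ = 0 := by rw [this, map_zero]
  calc x + x = 2 * x := by ring
  _ = 0 := by rw [h2, zero_mul]

lemma sub_eq_add' (x y : PolyRing m) : x - y = x + y := by
  have h : y + y = 0 := add_self_eq_zero' y
  calc x - y = x + y - (y + y) := by ring
  _ = x + y := by rw [h, sub_zero]

lemma prod_monomial_one {α : Type} (s : Finset α) (g : α → (Option (Fin (2*m)) →₀ ℕ)) :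
    ∏ a ∈ s, (MvPolynomial.monomial (g a) (1 : ZMod 2)) = MvPolynomial.monomial (∑ a ∈ s, g a) 1 := by
  classical
  induction s using Finset.induction_on with
  | empty => simp
  | insert _ _ h ih =>
      rw [Finset.prod_insert h, Finset.sum_insert h, ih, MvPolynomial.monomial_mul, one_mul]

lemma monomial_eq_R_pow_mul (f : Option (Fin (2*m)) →₀ ℕ) :
    MvPolynomial.monomial f (1 : ZMod 2)
      = (X none)^(f none) * ∏ i ∈ sf f, (X (some i))^(f (some i)) := by
  have harg : Finsupp.single (none : Option (Fin (2*m))) (f none)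
      + ∑ i ∈ sf f, Finsupp.single (some i) (f (some i)) = f := by
    ext v
    rw [Finsupp.add_apply, Finsupp.finset_sum_apply]
    cases v with
    | none =>
        rw [Finsupp.single_apply, if_pos rfl]
        have : ∀ i ∈ sf f, (Finsupp.single (some i) (f (some i))) (none : Option (Fin (2*m))) = 0 := by
          intro i _; rw [Finsupp.single_apply, if_neg (by simp)]
        rw [Finset.sum_congr rfl this, Finset.sum_const_zero, add_zero]
    | some j =>
        rw [Finsupp.single_apply, if_neg (by simp), zero_add]
        have : ∀ i ∈ sf f, (Finsupp.single (some i) (f (some i))) (some j)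
            = if i = j then f (some i) else 0 := by
          intro i _
          rw [Finsupp.single_apply]
          simp
        rw [Finset.sum_congr rfl this, Finset.sum_ite_eq' (sf f) j (fun i => f (some i))]
        by_cases hj : j ∈ sf f
        · rw [if_pos hj]
        · rw [if_neg hj]
          exact (not_not.mp fun h => hj (mem_sf.mpr h)).symm
  simp_rw [X_pow_eq_monomial, prod_monomial_one, monomial_mul, one_mul, harg]

lemma X_pow_sub_mem (i : Fin (2*m)) (k : ℕ) :
    ((X (some i) : PolyRing m))^(k+1) - (X none)^k * X (some i) ∈ J m := by
  induction k with
  | zero => simpa using (J m).zero_mem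
  | succ k ih =>
      have h1 : ((X (some i))^2 - X none * X (some i) : PolyRing m) ∈ J m := by
        rw [sub_eq_add']
        exact Ideal.subset_span (Set.mem_union_left _ ⟨i, rfl⟩)
      have key : ((X (some i) : PolyRing m))^(k+2) - (X none)^(k+1) * X (some i)
          = (X (some i))^k * ((X (some i))^2 - X none * X (some i))
            + X none * ((X (some i))^(k+1) - (X none)^k * X (some i)) := by ring
      rw [key]
      exact (J m).add_mem ((J m).mul_mem_left _ h1) ((J m).mul_mem_left _ ih)

lemma mul_sub_mul_mem {x x' y y' : PolyRing m} (hx : x - x' ∈ J m) (hy : y - y' ∈ J m) :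
    x*y - x'*y' ∈ J m := by
  have key : x*y - x'*y' = x*(y - y') + (x - x')*y' := by ring
  rw [key]
  exact (J m).add_mem ((J m).mul_mem_left _ hy) ((J m).mul_mem_right _ hx)

lemma prod_pow_reduce (S : Finset (Fin (2*m))) (k : Fin (2*m) → ℕ) (hk : ∀ i ∈ S, k i ≠ 0) :
    (∏ i ∈ S, (X (some i) : PolyRing m)^(k i))
      - (X none)^(∑ i ∈ S, (k i - 1)) * ∏ i ∈ S, X (some i) ∈ J m := by
  classical
  induction S using Finset.induction_on with
  | empty => simp
  | @insert a s ha ih =>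
      rw [Finset.prod_insert ha, Finset.prod_insert ha, Finset.sum_insert ha, pow_add]
      have h1 := X_pow_sub_mem (m := m) a (k a - 1)
      rw [Nat.sub_add_cancel (Nat.one_le_iff_ne_zero.mpr (hk a (Finset.mem_insert_self a s)))] at h1
      have h2 := ih (fun i hi => hk i (Finset.mem_insert_of_mem hi))
      have h3 := mul_sub_mul_mem h1 h2
      have key : (X (some a) : PolyRing m)^(k a) * ∏ i ∈ s, (X (some i))^(k i)
          - (X none)^(k a - 1) * (X none)^(∑ i ∈ s, (k i - 1)) * (X (some a) * ∏ i ∈ s, X (some i))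
          = (X (some a))^(k a) * (∏ i ∈ s, (X (some i))^(k i))
            - ((X none)^(k a - 1) * X (some a))
              * ((X none)^(∑ i ∈ s, (k i - 1)) * ∏ i ∈ s, X (some i)) := by ring
      rw [key]
      exact h3

lemma monomial_reduce (f : Option (Fin (2*m)) →₀ ℕ) (d : ℕ) (hd : f.degree = d) :
    MvPolynomial.monomial f (1 : ZMod 2) -
      (if (sf f).card ≤ m - 1 then (X none)^(d - (sf f).card) * ∏ i ∈ sf f, X (some i) else 0)
      ∈ J m := by
  have hsplit := degree_split f
  have hone : ∀ i ∈ sf f, f (some i) ≠ 0 := fun i hi => mem_sf.mp hi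
  have hsum : (∑ i ∈ sf f, (f (some i) - 1)) + (sf f).card = ∑ i ∈ sf f, f (some i) := by
    rw [Finset.card_eq_sum_ones, ← Finset.sum_add_distrib]
    exact Finset.sum_congr rfl (fun i hi => Nat.succ_pred_eq_of_pos
      (Nat.pos_of_ne_zero (hone i hi)))
  have hprod := prod_pow_reduce (sf f) (fun i => f (some i)) hone
  by_cases hcard : (sf f).card ≤ m - 1
  · rw [if_pos hcard, monomial_eq_R_pow_mul]
    have hexp : d - (sf f).card = f none + ∑ i ∈ sf f, (f (some i) - 1) := by omega
    rw [hexp, pow_add, mul_assoc]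
    have := (J m).mul_mem_left ((X none)^(f none)) hprod
    rw [mul_sub] at this
    exact this
  · rw [if_neg hcard, sub_zero, monomial_eq_R_pow_mul]
    apply (J m).mul_mem_left
    have h2 : ((∏ i ∈ sf f, X (some i)) : PolyRing m) ∈ J m :=
      Ideal.subset_span (Set.mem_union_right _ ⟨sf f, by omega, rfl⟩)
    have h3 := (J m).add_mem hprod ((J m).mul_mem_left ((X none)^(∑ i ∈ sf f, (f (some i) - 1))) h2)
    simpa using h3

lemma degree_of_mem_support {p : PolyRing m} {d : ℕ} (hp : p.IsHomogeneous d)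
    {f : Option (Fin (2*m)) →₀ ℕ} (hf : f ∈ p.support) : f.degree = d :=
  (DFunLike.congr_fun Finsupp.degree_eq_weight_one f).trans (hp (MvPolynomial.mem_support_iff.mp hf))

lemma poly_reduce {p : PolyRing m} {d : ℕ} (hp : p.IsHomogeneous d) :
    p - ∑ f ∈ p.support, MvPolynomial.C (MvPolynomial.coeff f p) *
      (if (sf f).card ≤ m - 1 then (X none)^(d - (sf f).card) * ∏ i ∈ sf f, X (some i) else 0)
      ∈ J m := by
  have key : p - ∑ f ∈ p.support, MvPolynomial.C (MvPolynomial.coeff f p) *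
      (if (sf f).card ≤ m - 1 then (X none)^(d - (sf f).card) * ∏ i ∈ sf f, X (some i) else 0)
      = ∑ f ∈ p.support, (MvPolynomial.monomial f (MvPolynomial.coeff f p)
        - MvPolynomial.C (MvPolynomial.coeff f p) *
          (if (sf f).card ≤ m - 1 then (X none)^(d - (sf f).card) * ∏ i ∈ sf f, X (some i) else 0)) := by
    rw [Finset.sum_sub_distrib, MvPolynomial.support_sum_monomial_coeff]
  rw [key]
  apply Submodule.sum_mem
  intro f hf
  have h := (J m).mul_mem_left (MvPolynomial.C (MvPolynomial.coeff f p))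
    (monomial_reduce f d (degree_of_mem_support hp hf))
  rw [mul_sub] at h
  simpa [MvPolynomial.C_mul_monomial] using h

/-! ### The test homomorphisms Φ_T -/

def sig (T : Finset (Fin (2*m))) : Option (Fin (2*m)) → ZMod 2
  | none => 1
  | some i => if i ∈ T then 1 else 0

@[simp] lemma sig_none (T : Finset (Fin (2*m))) : sig T none = 1 := rfl
@[simp] lemma sig_some (T : Finset (Fin (2*m))) (i : Fin (2*m)) :
    sig T (some i) = if i ∈ T then 1 else 0 := rfl

def Phi (m : ℕ) (T : Finset (Fin (2*m))) : PolyRing m →ₐ[ZMod 2] Polynomial (ZMod 2) :=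
  MvPolynomial.aeval (fun v => Polynomial.C (sig T v) * Polynomial.X)

lemma add_self_poly (x : Polynomial (ZMod 2)) : x + x = 0 :=
  CharTwo.add_self_eq_zero x

lemma even_nsmul_poly {n : ℕ} (hn : Even n) (x : Polynomial (ZMod 2)) : n • x = 0 := by
  obtain ⟨k, rfl⟩ := hn
  rw [add_nsmul, add_self_poly]

lemma Phi_monomial (T : Finset (Fin (2*m))) (f : Option (Fin (2*m)) →₀ ℕ) (c : ZMod 2) :
    Phi m T (MvPolynomial.monomial f c)
      = Polynomial.C (c * ∏ v ∈ f.support, sig T v ^ f v)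
          * Polynomial.X ^ (∑ v ∈ f.support, f v) := by
  rw [Phi, MvPolynomial.aeval_monomial, Finsupp.prod]
  have h : ∀ v ∈ f.support, (Polynomial.C (sig T v) * Polynomial.X) ^ f v
      = Polynomial.C (sig T v ^ f v) * Polynomial.X ^ f v := by
    intro v _; rw [mul_pow, Polynomial.C_pow]
  rw [Finset.prod_congr rfl h, Finset.prod_mul_distrib, ← map_prod,
    Finset.prod_pow_eq_pow_sum]
  have halg : algebraMap (ZMod 2) (Polynomial (ZMod 2)) c = Polynomial.C c := rfl
  rw [halg, ← mul_assoc, ← Polynomial.C_mul]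

lemma Phi_homog {p : PolyRing m} {d : ℕ} (hp : p.IsHomogeneous d) (T : Finset (Fin (2*m))) :
    Phi m T p = Polynomial.C (MvPolynomial.eval (sig T) p) * Polynomial.X ^ d := by
  have h1 : Phi m T p
      = ∑ f ∈ p.support, Phi m T (MvPolynomial.monomial f (MvPolynomial.coeff f p)) := by
    rw [← map_sum, MvPolynomial.support_sum_monomial_coeff]
  have h2 : ∀ f ∈ p.support, Phi m T (MvPolynomial.monomial f (MvPolynomial.coeff f p))
      = Polynomial.C (MvPolynomial.coeff f p * ∏ v ∈ f.support, sig T v ^ f v)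
          * Polynomial.X ^ d := by
    intro f hf
    rw [Phi_monomial, show (∑ v ∈ f.support, f v) = d from degree_of_mem_support hp hf]
  rw [h1, Finset.sum_congr rfl h2, ← Finset.sum_mul, ← map_sum, MvPolynomial.eval_eq]

lemma Phi_rel1 {g : PolyRing m} (hg : g ∈ rel1 m) (T : Finset (Fin (2*m))) :
    Phi m T g = 0 := by
  obtain ⟨i, rfl⟩ := hg
  rw [map_add, map_pow, map_mul, Phi, MvPolynomial.aeval_X, MvPolynomial.aeval_X]
  by_cases h : i ∈ T
  · simp only [sig_some, sig_none, if_pos h, map_one, one_mul]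
    rw [show (Polynomial.X : Polynomial (ZMod 2)) * Polynomial.X = Polynomial.X ^ 2 from (sq _).symm]
    exact add_self_poly _
  · simp [sig_some, if_neg h]

lemma Phi_rel2 {g : PolyRing m} (hg : g ∈ rel2 m) {T : Finset (Fin (2*m))}
    (hT : T.card ≤ m - 1) (hm : 1 ≤ m) : Phi m T g = 0 := by
  obtain ⟨S, hS, rfl⟩ := hg
  rw [map_prod]
  have hex : ∃ i ∈ S, i ∉ T := by
    by_contra h
    push_neg at h
    have := Finset.card_le_card (fun i hi => h i hi)
    omega
  obtain ⟨i, hiS, hiT⟩ := hex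
  apply Finset.prod_eq_zero hiS
  rw [Phi, MvPolynomial.aeval_X]
  simp [sig_some, if_neg hiT]

lemma Phi_rel3 {T : Finset (Fin (2*m))} (hT : T.card ≤ m - 1) (hm : 1 ≤ m)
    (L : Finset (Fin (2*m))) (hL : m + 1 ≤ L.card) :
    Phi m T (∑ S ∈ L.powerset, (X none)^(L.card - S.card - 1) * ∏ i ∈ S, X (some i))
      = if L ∩ T = ∅ then Polynomial.X ^ (L.card - 1) else 0 := by
  have h1 : Phi m T (X none : PolyRing m) = Polynomial.X := by
    rw [Phi, MvPolynomial.aeval_X]; simp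
  have h2 : ∀ i : Fin (2*m), Phi m T (X (some i) : PolyRing m)
      = if i ∈ T then Polynomial.X else 0 := by
    intro i
    rw [Phi, MvPolynomial.aeval_X]
    by_cases h : i ∈ T <;> simp [h]
  rw [map_sum]
  have step : ∀ S ∈ L.powerset,
      Phi m T ((X none : PolyRing m)^(L.card - S.card - 1) * ∏ i ∈ S, X (some i))
        = if S ⊆ T then Polynomial.X ^ (L.card - 1) else 0 := by
    intro S hS
    rw [map_mul, map_pow, map_prod, h1]
    simp_rw [h2]
    by_cases hST : S ⊆ T
    · rw [if_pos hST, Finset.prod_congr rfl (fun i hi => if_pos (hST hi)),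
        Finset.prod_const, ← pow_add]
      congr 1
      have h3 : S.card ≤ T.card := Finset.card_le_card hST
      have h4 : S.card ≤ L.card := Finset.card_le_card (Finset.mem_powerset.mp hS)
      omega
    · rw [if_neg hST]
      obtain ⟨i, hiS, hiT⟩ := Finset.not_subset.mp hST
      have hz : (∏ x ∈ S, if x ∈ T then Polynomial.X else (0 : Polynomial (ZMod 2))) = 0 :=
        Finset.prod_eq_zero hiS (if_neg hiT)
      rw [hz, mul_zero]
  rw [Finset.sum_congr rfl step, Finset.sum_ite, Finset.sum_const, Finset.sum_const_zero, add_zero]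
  have hfilter : L.powerset.filter (fun S => S ⊆ T) = (L ∩ T).powerset := by
    ext S
    rw [Finset.mem_filter, Finset.mem_powerset, Finset.mem_powerset, Finset.subset_inter_iff]
  rw [hfilter, Finset.card_powerset]
  by_cases hLT : L ∩ T = ∅
  · rw [if_pos hLT, hLT]
    simp
  · rw [if_neg hLT]
    apply even_nsmul_poly
    have hpos : 0 < (L ∩ T).card :=
      Finset.card_pos.mpr (Finset.nonempty_iff_ne_empty.mpr hLT)
    obtain ⟨c, hc⟩ : ∃ c, (L ∩ T).card = c + 1 := ⟨(L ∩ T).card - 1, by omega⟩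
    rw [hc, pow_succ]
    exact ⟨2 ^ c, by ring⟩

lemma Phi_ideal {x : PolyRing m} (hx : x ∈ idealI m) {T : Finset (Fin (2*m))}
    (hT : T.card ≤ m - 1) (hm : 1 ≤ m) :
    Polynomial.X ^ m ∣ Phi m T x := by
  rw [← Ideal.mem_span_singleton]
  have h1 : Phi m T x ∈ Ideal.map (Phi m T) (idealI m) := Ideal.mem_map_of_mem _ hx
  rw [idealI, Ideal.map_span] at h1
  refine Ideal.span_le.mpr ?_ h1
  rintro y ⟨g, hg, rfl⟩
  rw [SetLike.mem_coe]
  rcases hg with (hg1 | hg2) | hg3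
  · rw [Phi_rel1 hg1]
    exact Ideal.zero_mem _
  · rw [Phi_rel2 hg2 hT hm]
    exact Ideal.zero_mem _
  · obtain ⟨L, hL, rfl⟩ := hg3
    rw [Phi_rel3 hT hm L hL]
    by_cases hLT : L ∩ T = ∅
    · rw [if_pos hLT]
      rw [Ideal.mem_span_singleton]
      exact pow_dvd_pow _ (by omega)
    · rw [if_neg hLT]
      exact Ideal.zero_mem _

lemma Phi_coeff_zero (T : Finset (Fin (2*m))) (g : PolyRing m) :
    (Phi m T g).coeff 0 = MvPolynomial.constantCoeff g := by
  have key : (Polynomial.evalRingHom (0 : ZMod 2)).comp (Phi m T : PolyRing m →+* Polynomial (ZMod 2))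
      = (MvPolynomial.constantCoeff : PolyRing m →+* ZMod 2) := by
    apply MvPolynomial.ringHom_ext
    · intro c
      simp [Phi]
    · intro v
      simp [Phi]
  have h := RingHom.congr_fun key g
  simp only [RingHom.coe_comp, Function.comp_apply, Polynomial.coe_evalRingHom] at h
  rw [Polynomial.coeff_zero_eq_eval_zero]
  exact h

lemma prod_sig_pow (T : Finset (Fin (2*m))) (f : Option (Fin (2*m)) →₀ ℕ) :
    ∏ v ∈ f.support, sig T v ^ f v = if sf f ⊆ T then 1 else 0 := by
  by_cases h : sf f ⊆ T
  · rw [if_pos h]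
    apply Finset.prod_eq_one
    intro v hv
    cases v with
    | none => rw [sig_none, one_pow]
    | some i =>
        have hi : i ∈ sf f := mem_sf.mpr (Finsupp.mem_support_iff.mp hv)
        rw [sig_some, if_pos (h hi), one_pow]
  · rw [if_neg h]
    obtain ⟨i, hi, hiT⟩ := Finset.not_subset.mp h
    apply Finset.prod_eq_zero (Finsupp.mem_support_iff.mpr (mem_sf.mp hi))
    rw [sig_some, if_neg hiT]
    exact zero_pow (mem_sf.mp hi)

lemma eval_sig_eq (T : Finset (Fin (2*m))) (p : PolyRing m) :
    MvPolynomial.eval (sig T) p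
      = ∑ f ∈ p.support.filter (fun f => sf f ⊆ T), MvPolynomial.coeff f p := by
  rw [MvPolynomial.eval_eq, Finset.sum_filter]
  apply Finset.sum_congr rfl
  intro f _
  rw [prod_sig_pow]
  by_cases h : sf f ⊆ T
  · rw [if_pos h, if_pos h, mul_one]
  · rw [if_neg h, if_neg h, mul_zero]

lemma fiber_split (T : Finset (Fin (2*m))) (p : PolyRing m) :
    ∑ f ∈ p.support.filter (fun f => sf f ⊆ T), MvPolynomial.coeff f p
      = ∑ S ∈ T.powerset, ∑ f ∈ p.support.filter (fun f => sf f = S),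
          MvPolynomial.coeff f p := by
  have key := Finset.sum_fiberwise_of_maps_to (s := p.support.filter (fun f => sf f ⊆ T))
    (t := T.powerset) (g := sf) (f := fun f => MvPolynomial.coeff f p)
    (fun f hf => Finset.mem_powerset.mpr (Finset.mem_filter.mp hf).2)
  rw [← key]
  apply Finset.sum_congr rfl
  intro S hS
  congr 1
  ext f
  simp only [Finset.mem_filter, and_assoc]
  constructor
  · rintro ⟨h1, _, h3⟩; exact ⟨h1, h3⟩
  · rintro ⟨h1, h3⟩
    exact ⟨h1, by rw [h3]; exact Finset.mem_powerset.mp hS, h3⟩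

lemma mobius {F : Finset (Fin (2*m)) → ZMod 2} {k : ℕ}
    (h : ∀ T : Finset (Fin (2*m)), T.card ≤ k → ∑ S ∈ T.powerset, F S = 0) :
    ∀ T : Finset (Fin (2*m)), T.card ≤ k → F T = 0 := by
  intro T
  induction T using Finset.strongInduction with
  | H T ih =>
    intro hT
    have hsum := h T hT
    rw [← Finset.add_sum_erase _ _ (Finset.mem_powerset_self T)] at hsum
    have hz : ∀ S ∈ T.powerset.erase T, F S = 0 := by
      intro S hS
      obtain ⟨hne, hsub⟩ := Finset.mem_erase.mp hS
      have hsub' := Finset.mem_powerset.mp hsub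
      exact ih S (HasSubset.Subset.ssubset_of_ne hsub' hne)
        (le_trans (Finset.card_le_card hsub') hT)
    rw [Finset.sum_eq_zero hz, add_zero] at hsum
    exact hsum

/-! ### The special case `m = 2` -/

def TT : Finset (Finset (Fin (2*2))) := Finset.univ.filter (fun T => T.card ≤ 1)

lemma TT_card_le {T : Finset (Fin (2*2))} (hT : T ∈ TT) : T.card ≤ 2 - 1 :=
  (Finset.mem_filter.mp hT).2

def Lam (x : PolyRing 2) : ZMod 2 := ∑ T ∈ TT, (Phi 2 T x).coeff 2

lemma Lam_add (x y : PolyRing 2) : Lam (x + y) = Lam x + Lam y := by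
  simp [Lam, Finset.sum_add_distrib]

lemma countTT : ∀ L : Finset (Fin (2*2)), L.card = 3 →
    (∑ T ∈ TT, if L ∩ T = ∅ then (1 : ZMod 2) else 0) = 0 := by decide

lemma Lam_ideal {x : PolyRing 2} (hx : x ∈ idealI 2) : ∀ g : PolyRing 2, Lam (g * x) = 0 := by
  have hx' : x ∈ Submodule.span (PolyRing 2) (rel1 2 ∪ rel2 2 ∪ rel3 2) := hx
  refine Submodule.span_induction ?_ ?_ ?_ ?_ hx'
  · rintro y ((hy | hy) | hy) g
    · apply Finset.sum_eq_zero
      intro T _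
      rw [map_mul, Phi_rel1 hy, mul_zero, Polynomial.coeff_zero]
    · apply Finset.sum_eq_zero
      intro T hT
      rw [map_mul, Phi_rel2 hy (TT_card_le hT) one_le_two, mul_zero, Polynomial.coeff_zero]
    · obtain ⟨L, hL, rfl⟩ := hy
      have hL4 : L.card ≤ 4 := by
        have := Finset.card_le_univ L
        simpa using this
      have hphi : ∀ T ∈ TT, Phi 2 T (∑ S ∈ L.powerset,
          (X none)^(L.card - S.card - 1) * ∏ i ∈ S, X (some i))
          = if L ∩ T = ∅ then Polynomial.X ^ (L.card - 1) else 0 :=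
        fun T hT => Phi_rel3 (TT_card_le hT) one_le_two L hL
      rcases (by omega : L.card = 3 ∨ L.card = 4) with h3 | h4
      · have key : ∀ T ∈ TT, (Phi 2 T (g * (∑ S ∈ L.powerset,
            (X none)^(L.card - S.card - 1) * ∏ i ∈ S, X (some i)))).coeff 2
            = (if L ∩ T = ∅ then (1 : ZMod 2) else 0) * MvPolynomial.constantCoeff g := by
          intro T hT
          rw [map_mul, hphi T hT]
          by_cases hd : L ∩ T = ∅
          · rw [if_pos hd, if_pos hd, one_mul, h3, Polynomial.coeff_mul_X_pow',
              if_pos (by norm_num : 3 - 1 ≤ 2)]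
            have h22 : (2 : ℕ) - (3 - 1) = 0 := by norm_num
            rw [h22, Phi_coeff_zero]
          · rw [if_neg hd, if_neg hd, mul_zero, Polynomial.coeff_zero, zero_mul]
        rw [Lam, Finset.sum_congr rfl key, ← Finset.sum_mul, countTT L h3, zero_mul]
      · apply Finset.sum_eq_zero
        intro T hT
        rw [map_mul, hphi T hT]
        by_cases hd : L ∩ T = ∅
        · rw [if_pos hd, h4, Polynomial.coeff_mul_X_pow', if_neg (by norm_num : ¬ 4 - 1 ≤ 2)]
        · rw [if_neg hd, mul_zero, Polynomial.coeff_zero]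
  · intro g
    rw [mul_zero, Lam]
    simp
  · intro a b _ _ iha ihb g
    rw [mul_add, Lam_add, iha g, ihb g, add_zero]
  · intro a y _ ihy g
    rw [smul_eq_mul, show g * (a * y) = (g * a) * y by ring]
    exact ihy (g * a)

lemma Lam_Rsq : Lam ((X none : PolyRing 2)^2) = 1 := by
  have h : ∀ T ∈ TT, (Phi 2 T ((X none : PolyRing 2)^2)).coeff 2 = 1 := by
    intro T _
    rw [map_pow, show Phi 2 T (X none) = Polynomial.C (sig T none) * Polynomial.X
      from MvPolynomial.aeval_X _ _, sig_none, map_one, one_mul]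
    simp [Polynomial.coeff_X_pow]
  rw [Lam, Finset.sum_congr rfl h, Finset.sum_const, show TT.card = 5 by decide,
    nsmul_eq_mul]
  decide

lemma Rsq_not_mem : ((X none : PolyRing 2)^2) ∉ idealI 2 := by
  intro h
  have h1 := Lam_ideal h 1
  rw [one_mul, Lam_Rsq] at h1
  exact one_ne_zero h1

lemma homog_zero_eq_C {m' : ℕ} {p : PolyRing m'} (hp : p.IsHomogeneous 0) :
    p = MvPolynomial.C (MvPolynomial.coeff 0 p) := by
  apply MvPolynomial.ext
  intro f
  rw [MvPolynomial.coeff_C]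
  by_cases hf : (0 : Option (Fin (2*m')) →₀ ℕ) = f
  · rw [if_pos hf, ← hf]
  · rw [if_neg hf]
    by_contra hc
    have hdeg := hp hc
    have hd0 : f.degree = 0 := (DFunLike.congr_fun Finsupp.degree_eq_weight_one f).trans hdeg
    exact hf ((Finsupp.degree_eq_zero_iff f).mp hd0).symm

end HK8

/-- The `ℤ/2`-linear map `Λ_n^q → Λ_n^{q+2}`, `x ↦ R²·x`, is injective for `0 ≤ q ≤ m-3`
and surjective for `m-1 ≤ q ≤ 2m-4`. -/
theorem statement8 (m : ℕ) (hm : 2 ≤ m) :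
    (∀ q ≤ m - 3, ∀ x ∈ LambdaComp m q, mulR2 m x = 0 → x = 0) ∧
    (∀ q, m - 1 ≤ q → q ≤ 2*m - 4 →
      ∀ y ∈ LambdaComp m (q+2), ∃ x ∈ LambdaComp m q, mulR2 m x = y) := by
  have hm1 : 1 ≤ m := by omega
  constructor
  · -- injectivity
    intro q hq x hx hx0
    obtain ⟨p, hpmem, rfl⟩ := hx
    rw [SetLike.mem_coe, MvPolynomial.mem_homogeneousSubmodule] at hpmem
    have hx0' : Ideal.Quotient.mk (idealI m) ((MvPolynomial.X none)^2 * p) = 0 := by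
      have heq : mulR2 m ((Ideal.Quotient.mkₐ (ZMod 2) (idealI m)).toLinearMap p)
          = Ideal.Quotient.mk (idealI m) ((MvPolynomial.X none)^2 * p) := by
        simp only [mulR2, LinearMap.mulLeft_apply, AlgHom.toLinearMap_apply,
          Ideal.Quotient.mkₐ_eq_mk, ← map_mul]
      rw [← heq]
      exact hx0
    have hmem : ((MvPolynomial.X none : PolyRing m))^2 * p ∈ idealI m :=
      (Ideal.Quotient.eq_zero_iff_mem).mp hx0'
    suffices hpI : p ∈ idealI m by
      show (Ideal.Quotient.mkₐ (ZMod 2) (idealI m)).toLinearMap p = 0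
      rw [AlgHom.toLinearMap_apply, Ideal.Quotient.mkₐ_eq_mk]
      exact (Ideal.Quotient.eq_zero_iff_mem).mpr hpI
    by_cases hq2 : q + 2 ≤ m - 1
    · -- the generic case
      have heval : ∀ T : Finset (Fin (2*m)), T.card ≤ m - 1 →
          MvPolynomial.eval (HK8.sig T) p = 0 := by
        intro T hT
        have hdvd := HK8.Phi_ideal hmem hT hm1
        have hform : HK8.Phi m T ((MvPolynomial.X none)^2 * p)
            = Polynomial.C (MvPolynomial.eval (HK8.sig T) p) * Polynomial.X ^ (q + 2) := by
          rw [map_mul, map_pow, HK8.Phi_homog hpmem T,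
            show HK8.Phi m T (MvPolynomial.X none)
              = Polynomial.C (HK8.sig T none) * Polynomial.X from MvPolynomial.aeval_X _ _,
            HK8.sig_none, map_one, one_mul]
          ring
        rw [hform] at hdvd
        have hco := Polynomial.X_pow_dvd_iff.mp hdvd (q + 2) (by omega)
        simpa using hco
      have hstep1 : ∀ T : Finset (Fin (2*m)), T.card ≤ m - 1 →
          ∑ S ∈ T.powerset, (∑ f ∈ p.support.filter (fun f => HK8.sf f = S),
            MvPolynomial.coeff f p) = 0 := by
        intro T hT
        rw [← HK8.fiber_split T p, ← HK8.eval_sig_eq T p]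
        exact heval T hT
      have hstep2 := HK8.mobius hstep1
      have hred := HK8.poly_reduce (m := m) (d := q) hpmem
      have hN : ∑ f ∈ p.support, MvPolynomial.C (MvPolynomial.coeff f p) *
          (if (HK8.sf f).card ≤ m - 1
            then (MvPolynomial.X none)^(q - (HK8.sf f).card)
              * ∏ i ∈ HK8.sf f, MvPolynomial.X (some i)
            else 0) = 0 := by
        rw [← Finset.sum_fiberwise_of_maps_to (g := HK8.sf) (t := p.support.image HK8.sf)
          (fun f hf => Finset.mem_image_of_mem _ hf)]
        apply Finset.sum_eq_zero
        intro S hS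
        obtain ⟨f0, hf0, hf0S⟩ := Finset.mem_image.mp hS
        have h1 := HK8.sf_card_le_degree f0
        rw [HK8.degree_of_mem_support hpmem hf0] at h1
        have hcard : S.card ≤ m - 1 := by rw [← hf0S]; omega
        have hcongr : ∀ f ∈ p.support.filter (fun f => HK8.sf f = S),
            MvPolynomial.C (MvPolynomial.coeff f p) * (if (HK8.sf f).card ≤ m - 1
              then (MvPolynomial.X none)^(q - (HK8.sf f).card)
                * ∏ i ∈ HK8.sf f, MvPolynomial.X (some i) else 0)
            = MvPolynomial.C (MvPolynomial.coeff f p) * (if S.card ≤ m - 1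
              then (MvPolynomial.X none)^(q - S.card)
                * ∏ i ∈ S, MvPolynomial.X (some i) else 0) := by
          intro f hf
          rw [(Finset.mem_filter.mp hf).2]
        rw [Finset.sum_congr rfl hcongr, ← Finset.sum_mul, ← map_sum,
          hstep2 S hcard, map_zero, zero_mul]
      rw [hN, sub_zero] at hred
      exact HK8.J_le_idealI hred
    · -- the case m = 2, q = 0
      have hm2 : m = 2 := by omega
      have hq0 : q = 0 := by omega
      subst hm2
      subst hq0
      have hpC := HK8.homog_zero_eq_C hpmem
      by_cases hc : MvPolynomial.coeff 0 p = 0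
      · rw [hpC, hc, map_zero]
        exact (idealI 2).zero_mem
      · exfalso
        have hc1 : MvPolynomial.coeff 0 p = 1 :=
          (by decide : ∀ c : ZMod 2, c ≠ 0 → c = 1) _ hc
        apply HK8.Rsq_not_mem
        have hpe : ((MvPolynomial.X none : PolyRing 2))^2 * p = (MvPolynomial.X none)^2 := by
          rw [hpC, hc1, map_one, mul_one]
        rwa [hpe] at hmem
  · -- surjectivity
    intro q hq1 _ y hy
    obtain ⟨p, hpmem, rfl⟩ := hy
    rw [SetLike.mem_coe, MvPolynomial.mem_homogeneousSubmodule] at hpmem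
    set p' : PolyRing m := ∑ f ∈ p.support, MvPolynomial.C (MvPolynomial.coeff f p) *
      (if (HK8.sf f).card ≤ m - 1
        then (MvPolynomial.X none)^(q - (HK8.sf f).card)
          * ∏ i ∈ HK8.sf f, MvPolynomial.X (some i)
        else 0) with hp'
    have hp'h : p' ∈ MvPolynomial.homogeneousSubmodule (Option (Fin (2*m))) (ZMod 2) q := by
      rw [hp']
      apply Submodule.sum_mem
      intro f _
      rw [MvPolynomial.mem_homogeneousSubmodule]
      by_cases h : (HK8.sf f).card ≤ m - 1
      · rw [if_pos h]
        have h1 : MvPolynomial.IsHomogeneous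
            ((MvPolynomial.X none : PolyRing m)^(q - (HK8.sf f).card)) (q - (HK8.sf f).card) :=
          MvPolynomial.isHomogeneous_X_pow _ _
        have h2 : MvPolynomial.IsHomogeneous
            (∏ i ∈ HK8.sf f, (MvPolynomial.X (some i) : PolyRing m)) (HK8.sf f).card := by
          have := MvPolynomial.IsHomogeneous.prod (HK8.sf f)
            (fun i => (MvPolynomial.X (some i) : PolyRing m)) (fun _ => 1)
            (fun i _ => MvPolynomial.isHomogeneous_X _ _)
          simpa using this
        have h3 := (MvPolynomial.isHomogeneous_C
          (Option (Fin (2*m))) (MvPolynomial.coeff f p)).mul (h1.mul h2)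
        have hdeg : 0 + ((q - (HK8.sf f).card) + (HK8.sf f).card) = q := by omega
        rwa [hdeg] at h3
      · rw [if_neg h, mul_zero]
        exact MvPolynomial.isHomogeneous_zero _ _ _
    refine ⟨(Ideal.Quotient.mkₐ (ZMod 2) (idealI m)).toLinearMap p', Submodule.mem_map_of_mem hp'h, ?_⟩
    have hred := HK8.poly_reduce (m := m) (d := q + 2) hpmem
    have hsum : (MvPolynomial.X none : PolyRing m)^2 * p'
        = ∑ f ∈ p.support, MvPolynomial.C (MvPolynomial.coeff f p) *
          (if (HK8.sf f).card ≤ m - 1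
            then (MvPolynomial.X none)^(q + 2 - (HK8.sf f).card)
              * ∏ i ∈ HK8.sf f, MvPolynomial.X (some i)
            else 0) := by
      rw [hp', Finset.mul_sum]
      apply Finset.sum_congr rfl
      intro f _
      by_cases h : (HK8.sf f).card ≤ m - 1
      · rw [if_pos h, if_pos h,
          show q + 2 - (HK8.sf f).card = 2 + (q - (HK8.sf f).card) by omega, pow_add]
        ring
      · rw [if_neg h, if_neg h]
        ring
    have h1 : mulR2 m ((Ideal.Quotient.mkₐ (ZMod 2) (idealI m)).toLinearMap p')
        = Ideal.Quotient.mk (idealI m) ((MvPolynomial.X none)^2 * p') := by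
      simp only [mulR2, LinearMap.mulLeft_apply, AlgHom.toLinearMap_apply,
        Ideal.Quotient.mkₐ_eq_mk, ← map_mul]
    rw [h1, AlgHom.toLinearMap_apply, Ideal.Quotient.mkₐ_eq_mk, Ideal.Quotient.eq]
    apply HK8.J_le_idealI
    rw [hsum]
    simpa [neg_sub] using (HK8.J m).neg_mem hred

end
end

section
/- Let P be an N×N integer matrix with P² = I. Then there exist nonnegative integers x, y, z with 2x + y + z = N and a matrix S ∈ GL(N, ℤ) such that S⁻¹PS = F(x, y, z). -/
open CategoryTheory AlgebraicTopology Finset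

noncomputable section

/-- The block-diagonal integer matrix `F(x,y,z)` consisting of `x` copies of the block
`[[0,1],[1,0]]`, followed by `y` copies of `[1]` and `z` copies of `[-1]`. -/
def Fmat (x y z : ℕ) : Matrix (Fin (2*x+y+z)) (Fin (2*x+y+z)) ℤ :=
  Matrix.of fun i j =>
    if (i : ℕ) < 2*x then (if (j : ℕ) = 2*((i : ℕ)/2) + (1 - (i : ℕ) % 2) then 1 else 0)
    else if j = i then (if (i : ℕ) < 2*x + y then 1 else -1) else 0

set_option maxHeartbeats 1000000

lemma Fmat_col_pair0 {x y z a : ℕ} (ha : a < x) (κ κ' : Fin (2*x+y+z)) (hκ' : (κ':ℕ) = 2*a) :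
    Fmat x y z κ κ' = if (κ:ℕ) = 2*a+1 then 1 else 0 := by
  simp only [Fmat, Matrix.of_apply, Fin.ext_iff]
  split_ifs <;> omega

lemma Fmat_col_pair1 {x y z a : ℕ} (ha : a < x) (κ κ' : Fin (2*x+y+z)) (hκ' : (κ':ℕ) = 2*a+1) :
    Fmat x y z κ κ' = if (κ:ℕ) = 2*a then 1 else 0 := by
  simp only [Fmat, Matrix.of_apply, Fin.ext_iff]
  split_ifs <;> omega

lemma Fmat_col_one {x y z : ℕ} (κ κ' : Fin (2*x+y+z)) (h1 : 2*x ≤ (κ':ℕ)) (h2 : (κ':ℕ) < 2*x+y) :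
    Fmat x y z κ κ' = if (κ:ℕ) = (κ':ℕ) then 1 else 0 := by
  simp only [Fmat, Matrix.of_apply, Fin.ext_iff]
  split_ifs <;> omega

lemma Fmat_col_neg {x y z : ℕ} (κ κ' : Fin (2*x+y+z)) (h1 : 2*x+y ≤ (κ':ℕ)) :
    Fmat x y z κ κ' = if (κ:ℕ) = (κ':ℕ) then -1 else 0 := by
  simp only [Fmat, Matrix.of_apply, Fin.ext_iff]
  split_ifs <;> omega

def pairsE (x : ℕ) : (Fin x ⊕ Fin x) ≃ Fin (2*x) where
  toFun t := Sum.rec (fun i => ⟨2*i.1, by omega⟩) (fun i => ⟨2*i.1+1, by omega⟩) t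
  invFun k := if (k:ℕ) % 2 = 0 then Sum.inl ⟨(k:ℕ)/2, by omega⟩ else Sum.inr ⟨(k:ℕ)/2, by omega⟩
  left_inv := by
    rintro (⟨i,hi⟩|⟨i,hi⟩) <;> simp only []
    · rw [if_pos (by omega)]
      simp only [Sum.inl.injEq, Fin.ext_iff]; omega
    · rw [if_neg (by omega)]
      simp only [Sum.inr.injEq, Fin.ext_iff]; omega
  right_inv := by
    intro ⟨k, hk⟩
    dsimp only
    by_cases h : k % 2 = 0
    · rw [if_pos h]; simp only [Fin.ext_iff]; omega
    · rw [if_neg h]; simp only [Fin.ext_iff]; omega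


theorem aux (M : Type) [AddCommGroup M] [Module.Finite ℤ M] [Module.Free ℤ M]
    (f : M →ₗ[ℤ] M) (hff : ∀ v, f (f v) = v) :
    ∃ (x y z : ℕ) (b : Module.Basis (Fin (2*x+y+z)) ℤ M), LinearMap.toMatrix b b f = Fmat x y z := by
  classical
  set L : Submodule ℤ M := LinearMap.ker (f + LinearMap.id) with hL
  have hmemL : ∀ w, w ∈ L ↔ f w = -w := by
    intro w
    rw [hL, LinearMap.mem_ker, LinearMap.add_apply, LinearMap.id_apply, add_eq_zero_iff_eq_neg]
  have hfL : ∀ l : L, f ↑l = -(l : M) := fun l => (hmemL l).mp l.2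
  haveI : NoZeroSMulDivisors ℤ (M ⧸ L) := by
    refine ⟨fun {c q} hcq => ?_⟩
    by_cases hc : c = 0
    · exact Or.inl hc
    refine Or.inr ?_
    obtain ⟨v, rfl⟩ := Submodule.mkQ_surjective L q
    rw [← map_smul, Submodule.mkQ_apply, Submodule.Quotient.mk_eq_zero] at hcq
    rw [Submodule.mkQ_apply, Submodule.Quotient.mk_eq_zero]
    rw [hL, LinearMap.mem_ker] at hcq ⊢
    rw [map_smul] at hcq
    exact (smul_eq_zero.mp hcq).resolve_left hc
  haveI : Module.Free ℤ (M ⧸ L) := Module.free_of_finite_type_torsion_free'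
  obtain ⟨s, hs⟩ := Module.projective_lifting_property L.mkQ LinearMap.id (Submodule.mkQ_surjective L)
  have hsπ : ∀ q, L.mkQ (s q) = q := fun q => LinearMap.congr_fun hs q
  have hβmem : ∀ q, ((f - LinearMap.id : M →ₗ[ℤ] M)) (s q) ∈ L := by
    intro q
    rw [hmemL]
    simp only [LinearMap.sub_apply, LinearMap.id_apply, map_sub, hff, neg_sub]
  set β : (M ⧸ L) →ₗ[ℤ] L := LinearMap.codRestrict L ((f - LinearMap.id) ∘ₗ s) (fun q => by simpa using hβmem q)
    with hβ
  have hβval : ∀ q, (↑(β q) : M) = f (s q) - s q := by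
    intro q
    rw [hβ]
    simp [LinearMap.codRestrict_apply, LinearMap.sub_apply]
  have hfs : ∀ q, f (s q) = s q + ↑(β q) := by
    intro q; rw [hβval]; abel
  obtain ⟨m, bL0⟩ := Submodule.basisOfPid (Module.Free.chooseBasis ℤ M) L
  obtain ⟨r, bL, bR, σ, a, hsnf⟩ := Submodule.smithNormalForm bL0 (LinearMap.range β)
  haveI : Module.Free ℤ ↥(LinearMap.range β) := Module.Free.of_basis bR
  obtain ⟨ρ, hρ⟩ := Module.projective_lifting_property β.rangeRestrict LinearMap.id
      (LinearMap.surjective_rangeRestrict β)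
  have hβρ : ∀ w : LinearMap.range β, β (ρ w) = ↑w := by
    intro w
    have h1 : β.rangeRestrict (ρ w) = w := LinearMap.congr_fun hρ w
    have := congrArg (Subtype.val) h1
    simpa using this
  obtain ⟨p, bK⟩ := Submodule.basisOfPid (Module.Free.chooseBasis ℤ (M ⧸ L)) (LinearMap.ker β)
  -- E2 : ker β × range β ≃ M ⧸ L
  obtain ⟨E2, hE2kr⟩ : ∃ E2 : (↥(LinearMap.ker β) × ↥(LinearMap.range β)) ≃ₗ[ℤ] (M ⧸ L),
      ∀ (k : ↥(LinearMap.ker β)) (w : ↥(LinearMap.range β)), E2 (k, w) = (↑k : M ⧸ L) + ρ w := by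
    have hβk : ∀ k : ↥(LinearMap.ker β), β.rangeRestrict ↑k = 0 := by
      intro k
      ext
      have : β (↑k : M ⧸ L) = 0 := LinearMap.mem_ker.mp k.2
      simp [this]
    have hρw : ∀ w, β.rangeRestrict (ρ w) = w := fun w => LinearMap.congr_fun hρ w
    refine ⟨LinearEquiv.ofLinear
      (LinearMap.coprod (LinearMap.ker β).subtype ρ)
      (LinearMap.prod
        (LinearMap.codRestrict (LinearMap.ker β) (LinearMap.id - ρ ∘ₗ β.rangeRestrict) (by
          intro q
          rw [LinearMap.mem_ker]
          simp only [LinearMap.sub_apply, LinearMap.id_apply, LinearMap.comp_apply, map_sub,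
            hβρ]
          have : (↑(β.rangeRestrict q) : ↥L) = β q := rfl
          rw [this, sub_self]))
        β.rangeRestrict)
      ?_ ?_, fun k w => rfl⟩
    · ext q
      simp [LinearMap.codRestrict_apply]
    · refine LinearMap.ext fun kw => Prod.ext ?_ ?_
      · ext
        simp [LinearMap.codRestrict_apply, map_add, hβk, hρw]
      · simp [map_add, hβk, hρw]
  -- E1 : L × (M ⧸ L) ≃ M
  obtain ⟨E1, hE1lq⟩ : ∃ E1 : (↥L × (M ⧸ L)) ≃ₗ[ℤ] M,
      ∀ (l : ↥L) (q : M ⧸ L), E1 (l, q) = (↑l : M) + s q := by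
    have hπl : ∀ l : ↥L, L.mkQ ↑l = 0 := by
      intro l
      rw [Submodule.mkQ_apply, Submodule.Quotient.mk_eq_zero]
      exact l.2
    refine ⟨LinearEquiv.ofLinear
      (LinearMap.coprod L.subtype s)
      (LinearMap.prod
        (LinearMap.codRestrict L (LinearMap.id - s ∘ₗ L.mkQ) (by
          intro v
          simp only [LinearMap.sub_apply, LinearMap.id_apply, LinearMap.comp_apply]
          exact (Submodule.Quotient.mk_eq_zero L).mp
            (by rw [← Submodule.mkQ_apply, map_sub, hsπ, sub_self])))
        L.mkQ)
      ?_ ?_, fun l q => rfl⟩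
    · ext v
      simp [LinearMap.codRestrict_apply]
    · refine LinearMap.ext fun lq => Prod.ext ?_ ?_
      · ext
        simp [LinearMap.codRestrict_apply, map_add, hπl, hsπ]
      · simp [map_add, hπl, hsπ]
  -- combined basis of M
  obtain ⟨bM0, hbM0l, hbM0k, hbM0r⟩ : ∃ b : Module.Basis ((Fin m) ⊕ (Fin p ⊕ Fin r)) ℤ M,
      (∀ j, b (Sum.inl j) = (↑(bL j) : M)) ∧ (∀ i, b (Sum.inr (Sum.inl i)) = s ↑(bK i)) ∧
      (∀ i, b (Sum.inr (Sum.inr i)) = s (ρ (bR i))) := by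
    refine ⟨(bL.prod ((bK.prod bR).map E2)).map E1, fun j => ?_, fun i => ?_, fun i => ?_⟩
    · rw [Module.Basis.map_apply, show (bL.prod ((bK.prod bR).map E2)) (Sum.inl j)
          = (bL j, (0 : M ⧸ L)) from Prod.ext (by simp) (by simp), hE1lq, map_zero, add_zero]
    · rw [Module.Basis.map_apply, show (bL.prod ((bK.prod bR).map E2)) (Sum.inr (Sum.inl i))
          = ((0 : ↥L), ((bK.prod bR).map E2) (Sum.inl i)) from Prod.ext (by simp) (by simp),
        hE1lq, Module.Basis.map_apply, show (bK.prod bR) (Sum.inl i) = (bK i, (0 : ↥(LinearMap.range β)))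
          from Prod.ext (by simp) (by simp), hE2kr]
      simp
    · rw [Module.Basis.map_apply, show (bL.prod ((bK.prod bR).map E2)) (Sum.inr (Sum.inr i))
          = ((0 : ↥L), ((bK.prod bR).map E2) (Sum.inr i)) from Prod.ext (by simp) (by simp),
        hE1lq, Module.Basis.map_apply, show (bK.prod bR) (Sum.inr i) = ((0 : ↥(LinearMap.ker β)), bR i)
          from Prod.ext (by simp) (by simp), hE2kr]
      simp
  -- adjusted vectors
  set ε : Fin r → ℤ := fun i => if Odd (a i) then 1 else 0 with hε
  set u : Fin r → ℤ := fun i => (a i - ε i) / 2 with hu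
  have hau : ∀ i, a i - 2 * u i = ε i := by
    intro i
    rw [hu, hε]
    dsimp only
    by_cases h : Odd (a i)
    · rw [if_pos h]
      obtain ⟨t, ht⟩ := h
      omega
    · rw [if_neg h]
      obtain ⟨t, ht⟩ := Int.not_odd_iff_even.mp h
      omega
  set lvec : Fin m → M := fun j => (↑(bL j) : M) with hlvec
  set cvec : Fin r → M := fun i => s (ρ (bR i)) with hcvec
  set c' : Fin r → M := fun i => cvec i + u i • lvec (σ i) with hc'
  have hflvec : ∀ j, f (lvec j) = - lvec j := fun j => hfL (bL j)
  have hfcvec : ∀ i, f (cvec i) = cvec i + a i • lvec (σ i) := by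
    intro i
    rw [hcvec]
    simp only [hfs (ρ (bR i)), hβρ, hsnf i]
    rw [hlvec]
    norm_cast
  have hfc' : ∀ i, f (c' i) = c' i + ε i • lvec (σ i) := by
    intro i
    have ha : a i = ε i + 2 * u i := by have := hau i; omega
    rw [hc']
    simp only [map_add, map_smul, hfcvec, hflvec]
    rw [ha]
    module
  -- the final family of vectors
  set v : (Fin m ⊕ (Fin p ⊕ Fin r)) → M := fun idx =>
    Sum.rec (fun j => if h : ∃ i, Odd (a i) ∧ σ i = j then c' h.choose + lvec j else lvec j)
      (Sum.rec (fun i => s ↑(bK i)) (fun i => c' i)) idx with hv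
  have hvl_pos : ∀ j (h : ∃ i, Odd (a i) ∧ σ i = j), v (Sum.inl j) = c' h.choose + lvec j := by
    intro j h
    rw [hv]
    dsimp only
    rw [dif_pos h]
  have hvl_neg : ∀ j, ¬(∃ i, Odd (a i) ∧ σ i = j) → v (Sum.inl j) = lvec j := by
    intro j h
    rw [hv]
    dsimp only
    rw [dif_neg h]
  have hvk : ∀ i, v (Sum.inr (Sum.inl i)) = s ↑(bK i) := fun i => rfl
  have hvr : ∀ i, v (Sum.inr (Sum.inr i)) = c' i := fun i => rfl
  have hchoice : ∀ j (h : ∃ i, Odd (a i) ∧ σ i = j) (i : Fin r), Odd (a i) → σ i = j →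
      h.choose = i := by
    intro j h i hi hij
    exact σ.injective (h.choose_spec.2.trans hij.symm)
  have hεone : ∀ i, Odd (a i) → ε i = 1 := by
    intro i hi
    rw [hε]
    dsimp only
    rw [if_pos hi]
  have hεzero : ∀ i, ¬Odd (a i) → ε i = 0 := by
    intro i hi
    rw [hε]
    dsimp only
    rw [if_neg hi]
  have hfv_pair1 : ∀ (i : Fin r), Odd (a i) → f (v (Sum.inl (σ i))) = v (Sum.inr (Sum.inr i)) := by
    intro i hi
    have h : ∃ i', Odd (a i') ∧ σ i' = σ i := ⟨i, hi, rfl⟩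
    rw [hvl_pos _ h, hchoice _ h i hi rfl, map_add, hfc' i, hflvec, hvr, hεone i hi, one_smul]
    abel
  have hfv_neg : ∀ j, ¬(∃ i, Odd (a i) ∧ σ i = j) → f (v (Sum.inl j)) = -v (Sum.inl j) := by
    intro j h
    rw [hvl_neg j h, hflvec]
  have hfv_fix : ∀ i, f (v (Sum.inr (Sum.inl i))) = v (Sum.inr (Sum.inl i)) := by
    intro i
    rw [hvk, hfs]
    have h0 : β ↑(bK i) = 0 := LinearMap.mem_ker.mp (bK i).2
    rw [h0]
    simp
  have hfv_pair0 : ∀ i, Odd (a i) → f (v (Sum.inr (Sum.inr i))) = v (Sum.inl (σ i)) := by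
    intro i hi
    have h : ∃ i', Odd (a i') ∧ σ i' = σ i := ⟨i, hi, rfl⟩
    rw [hvr, hfc' i, hvl_pos _ h, hchoice _ h i hi rfl, hεone i hi, one_smul]
  have hfv_even : ∀ i, ¬Odd (a i) → f (v (Sum.inr (Sum.inr i))) = v (Sum.inr (Sum.inr i)) := by
    intro i hi
    rw [hvr, hfc' i, hεzero i hi, zero_smul, add_zero]
  -- the family is a basis
  set g : M →ₗ[ℤ] M := bM0.constr ℤ v with hg
  have hgb : ∀ idx, g (bM0 idx) = v idx := by
    intro idx
    rw [hg, Module.Basis.constr_basis]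
  have hlv_mem : ∀ j, lvec j ∈ LinearMap.range g := by
    intro j
    by_cases h : ∃ i, Odd (a i) ∧ σ i = j
    · have h1 : lvec j = g (bM0 (Sum.inl j)) - g (bM0 (Sum.inr (Sum.inr h.choose))) := by
        rw [hgb, hgb, hvl_pos _ h, hvr]
        abel
      rw [h1]
      exact Submodule.sub_mem _ (LinearMap.mem_range_self g _) (LinearMap.mem_range_self g _)
    · exact ⟨bM0 (Sum.inl j), by rw [hgb, hvl_neg j h]⟩
  have hsurj : Function.Surjective g := by
    rw [← LinearMap.range_eq_top]
    refine top_unique ?_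
    rw [← bM0.span_eq]
    refine Submodule.span_le.mpr ?_
    rintro w ⟨idx, rfl⟩
    simp only [SetLike.mem_coe]
    rcases idx with j | i | i
    · rw [hbM0l]
      exact hlv_mem j
    · rw [hbM0k]
      exact ⟨bM0 (Sum.inr (Sum.inl i)), by rw [hgb, hvk]⟩
    · rw [hbM0r]
      have h1 : s (ρ (bR i)) = g (bM0 (Sum.inr (Sum.inr i))) - u i • lvec (σ i) := by
        rw [hgb, hvr, hc']
        dsimp only
        rw [hcvec]
        abel
      rw [h1]
      exact Submodule.sub_mem _ (LinearMap.mem_range_self g _)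
        (Submodule.smul_mem _ _ (hlv_mem (σ i)))
  have hinj : Function.Injective g := OrzechProperty.injective_of_surjective_endomorphism g hsurj
  set bV : Module.Basis (Fin m ⊕ (Fin p ⊕ Fin r)) ℤ M :=
    bM0.map (LinearEquiv.ofBijective g ⟨hinj, hsurj⟩) with hbV
  have hbVv : ∀ idx, bV idx = v idx := by
    intro idx
    rw [hbV, Module.Basis.map_apply]
    exact hgb idx
  -- index bookkeeping
  set x := Fintype.card {i : Fin r // Odd (a i)} with hx
  set w0 := Fintype.card {i : Fin r // ¬ Odd (a i)} with hw0
  set z := Fintype.card {j : Fin m // ¬ ∃ i, Odd (a i) ∧ σ i = j} with hz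
  set y := p + w0 with hy
  obtain ⟨eO⟩ : Nonempty ({i : Fin r // Odd (a i)} ≃ Fin x) := ⟨Fintype.equivFinOfCardEq rfl⟩
  obtain ⟨eE⟩ : Nonempty ({i : Fin r // ¬ Odd (a i)} ≃ Fin w0) := ⟨Fintype.equivFinOfCardEq rfl⟩
  obtain ⟨eZ⟩ : Nonempty ({j : Fin m // ¬ ∃ i, Odd (a i) ∧ σ i = j} ≃ Fin z) :=
    ⟨Fintype.equivFinOfCardEq rfl⟩
  obtain ⟨eJ, heJ⟩ : ∃ eJ : {i : Fin r // Odd (a i)} ≃ {j : Fin m // ∃ i, Odd (a i) ∧ σ i = j},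
      ∀ o, (eJ o : Fin m) = σ (o : Fin r) := by
    refine ⟨Equiv.ofBijective (fun o => ⟨σ o.1, ⟨o.1, o.2, rfl⟩⟩) ⟨?_, ?_⟩, fun o => rfl⟩
    · intro o1 o2 h12
      exact Subtype.ext (σ.injective (congrArg Subtype.val h12))
    · intro j
      exact ⟨⟨j.2.choose, j.2.choose_spec.1⟩, Subtype.ext j.2.choose_spec.2⟩
  set rearr : ({i : Fin r // Odd (a i)} ⊕ {j : Fin m // ¬ ∃ i, Odd (a i) ∧ σ i = j}) ⊕
      (Fin p ⊕ ({i : Fin r // Odd (a i)} ⊕ {i : Fin r // ¬ Odd (a i)})) ≃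
      (({i : Fin r // Odd (a i)} ⊕ {i : Fin r // Odd (a i)}) ⊕
      ((Fin p ⊕ {i : Fin r // ¬ Odd (a i)}) ⊕ {j : Fin m // ¬ ∃ i, Odd (a i) ∧ σ i = j})) :=
    { toFun := fun t => match t with
        | .inl (.inl o) => .inl (.inr o)
        | .inl (.inr zz) => .inr (.inr zz)
        | .inr (.inl i) => .inr (.inl (.inl i))
        | .inr (.inr (.inl o)) => .inl (.inl o)
        | .inr (.inr (.inr ee)) => .inr (.inl (.inr ee)),
      invFun := fun t => match t with
        | .inl (.inl o) => .inr (.inr (.inl o))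
        | .inl (.inr o) => .inl (.inl o)
        | .inr (.inl (.inl i)) => .inr (.inl i)
        | .inr (.inl (.inr ee)) => .inr (.inr (.inr ee))
        | .inr (.inr zz) => .inl (.inr zz),
      left_inv := by rintro ((o|zz)|(i|(o|ee))) <;> rfl,
      right_inv := by rintro ((o|o)|((i|ee)|zz)) <;> rfl } with hrearr
  set Φ : (Fin m ⊕ (Fin p ⊕ Fin r)) ≃ Fin (2*x + y + z) :=
    ((Equiv.sumCongr
        (((Equiv.sumCompl (fun j : Fin m => ∃ i, Odd (a i) ∧ σ i = j)).symm).trans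
          (Equiv.sumCongr eJ.symm (Equiv.refl _)))
        (Equiv.sumCongr (Equiv.refl (Fin p))
          ((Equiv.sumCompl (fun i : Fin r => Odd (a i))).symm))).trans rearr).trans
      ((Equiv.sumCongr
        ((Equiv.sumCongr eO eO).trans (pairsE x))
        ((Equiv.sumCongr ((Equiv.sumCongr (Equiv.refl (Fin p)) eE).trans finSumFinEquiv)
          eZ).trans finSumFinEquiv)).trans
        (finSumFinEquiv.trans (finCongr (by omega)))) with hΦ
  have hΦ0 : ∀ o : {i : Fin r // Odd (a i)},
      (Φ (Sum.inr (Sum.inr o.1)) : ℕ) = 2 * (eO o : ℕ) := by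
    intro o
    have h2 : (Equiv.sumCompl (fun i : Fin r => Odd (a i))).symm o.1 = Sum.inl ⟨o.1, o.2⟩ :=
      Equiv.sumCompl_symm_apply_of_pos (p := fun i : Fin r => Odd (a i)) (a := o.1) o.2
    rw [hΦ]
    simp only [Equiv.trans_apply, Equiv.sumCongr_apply, Sum.map_inr, Sum.map_inl,
      Equiv.refl_apply, h2]
    rfl
  have hΦ1 : ∀ o : {i : Fin r // Odd (a i)},
      (Φ (Sum.inl (σ o.1)) : ℕ) = 2 * (eO o : ℕ) + 1 := by
    intro o
    have hpf : ∃ i, Odd (a i) ∧ σ i = σ o.1 := ⟨o.1, o.2, rfl⟩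
    have h1 : (Equiv.sumCompl (fun j : Fin m => ∃ i, Odd (a i) ∧ σ i = j)).symm (σ o.1)
        = Sum.inl ⟨σ o.1, hpf⟩ := Equiv.sumCompl_symm_apply_of_pos (p := fun j : Fin m => ∃ i, Odd (a i) ∧ σ i = j) (a := σ o.1) hpf
    have h3 : eJ.symm ⟨σ o.1, hpf⟩ = o := by
      rw [Equiv.symm_apply_eq]
      exact Subtype.ext (heJ o).symm
    rw [hΦ]
    simp only [Equiv.trans_apply, Equiv.sumCongr_apply, Sum.map_inr, Sum.map_inl,
      Equiv.refl_apply, h1, h3]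
    rfl
  have hΦp : ∀ i : Fin p, (Φ (Sum.inr (Sum.inl i)) : ℕ) = 2*x + (i : ℕ) := by
    intro i
    rw [hΦ]
    simp only [Equiv.trans_apply, Equiv.sumCongr_apply, Sum.map_inr, Sum.map_inl,
      Equiv.refl_apply]
    rfl
  have hΦe : ∀ ee : {i : Fin r // ¬ Odd (a i)},
      (Φ (Sum.inr (Sum.inr ee.1)) : ℕ) = 2*x + ((p : ℕ) + (eE ee : ℕ)) := by
    intro ee
    have h2 : (Equiv.sumCompl (fun i : Fin r => Odd (a i))).symm ee.1 = Sum.inr ⟨ee.1, ee.2⟩ :=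
      Equiv.sumCompl_symm_apply_of_neg (p := fun i : Fin r => Odd (a i)) (a := ee.1) ee.2
    rw [hΦ]
    simp only [Equiv.trans_apply, Equiv.sumCongr_apply, Sum.map_inr, Sum.map_inl,
      Equiv.refl_apply, h2]
    rfl
  have hΦz : ∀ zz : {j : Fin m // ¬ ∃ i, Odd (a i) ∧ σ i = j},
      (Φ (Sum.inl zz.1) : ℕ) = 2*x + (y + (eZ zz : ℕ)) := by
    intro zz
    have h1 : (Equiv.sumCompl (fun j : Fin m => ∃ i, Odd (a i) ∧ σ i = j)).symm zz.1
        = Sum.inr ⟨zz.1, zz.2⟩ := Equiv.sumCompl_symm_apply_of_neg (p := fun j : Fin m => ∃ i, Odd (a i) ∧ σ i = j) (a := zz.1) zz.2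
    rw [hΦ]
    simp only [Equiv.trans_apply, Equiv.sumCongr_apply, Sum.map_inr, Sum.map_inl,
      Equiv.refl_apply, h1]
    rfl
  -- delta helpers
  have hδ : ∀ (i0 idx : Fin m ⊕ (Fin p ⊕ Fin r)) (n1 : ℕ), (Φ idx : ℕ) = n1 →
      ((if idx = i0 then (1:ℤ) else 0) = if (Φ i0 : ℕ) = n1 then 1 else 0) := by
    intro i0 idx n1 hn
    by_cases hc : idx = i0
    · rw [if_pos hc, if_pos (by rw [← hc, hn])]
    · rw [if_neg hc, if_neg (fun hcontra => hc (Φ.injective (Fin.ext (hn.trans hcontra.symm))))]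
  have hδdiag : ∀ (i0 idx : Fin m ⊕ (Fin p ⊕ Fin r)),
      ((if idx = i0 then (1:ℤ) else 0) = if (Φ i0 : ℕ) = (Φ idx : ℕ) then 1 else 0) :=
    fun i0 idx => hδ i0 idx _ rfl
  have hδneg : ∀ (i0 idx : Fin m ⊕ (Fin p ⊕ Fin r)),
      (-(if idx = i0 then (1:ℤ) else 0) = if (Φ i0 : ℕ) = (Φ idx : ℕ) then -1 else 0) := by
    intro i0 idx
    by_cases hc : idx = i0
    · rw [if_pos hc, if_pos (by rw [hc])]
    · rw [if_neg hc, if_neg (fun hcontra => hc (Φ.injective (Fin.ext hcontra)).symm), neg_zero]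
  refine ⟨x, y, z, bV.reindex Φ, ?_⟩
  ext κ κ'
  rw [LinearMap.toMatrix_apply]
  obtain ⟨i0, rfl⟩ := Φ.surjective κ
  obtain ⟨j0, rfl⟩ := Φ.surjective κ'
  rw [Module.Basis.reindex_apply, Module.Basis.repr_reindex_apply, Equiv.symm_apply_apply,
    Equiv.symm_apply_apply]
  rcases j0 with j | i | i
  · by_cases hP : ∃ i, Odd (a i) ∧ σ i = j
    · obtain ⟨i1, hodd, rfl⟩ := hP
      rw [hbVv, hfv_pair1 i1 hodd, ← hbVv (Sum.inr (Sum.inr i1)), Module.Basis.repr_self,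
        Finsupp.single_apply]
      rw [Fmat_col_pair1 (eO ⟨i1, hodd⟩).isLt _ _ (hΦ1 ⟨i1, hodd⟩)]
      exact hδ i0 (Sum.inr (Sum.inr i1)) _ (hΦ0 ⟨i1, hodd⟩)
    · rw [hbVv, hfv_neg j hP, ← hbVv (Sum.inl j), map_neg, Module.Basis.repr_self, Finsupp.neg_apply,
        Finsupp.single_apply]
      rw [Fmat_col_neg _ _ (by rw [hΦz ⟨j, hP⟩]; omega)]
      exact hδneg i0 (Sum.inl j)
  · rw [hbVv, hfv_fix i, ← hbVv (Sum.inr (Sum.inl i)), Module.Basis.repr_self, Finsupp.single_apply]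
    rw [Fmat_col_one _ _ (by rw [hΦp i]; omega)
      (by rw [hΦp i, hy]; have := i.isLt; omega)]
    exact hδdiag i0 (Sum.inr (Sum.inl i))
  · by_cases hoi : Odd (a i)
    · rw [hbVv, hfv_pair0 i hoi, ← hbVv (Sum.inl (σ i)), Module.Basis.repr_self,
        Finsupp.single_apply]
      rw [Fmat_col_pair0 (eO ⟨i, hoi⟩).isLt _ _ (hΦ0 ⟨i, hoi⟩)]
      exact hδ i0 (Sum.inl (σ i)) _ (hΦ1 ⟨i, hoi⟩)
    · rw [hbVv, hfv_even i hoi, ← hbVv (Sum.inr (Sum.inr i)), Module.Basis.repr_self,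
        Finsupp.single_apply]
      rw [Fmat_col_one _ _ (by rw [hΦe ⟨i, hoi⟩]; omega)
        (by rw [hΦe ⟨i, hoi⟩, hy]; have := (eE ⟨i, hoi⟩).isLt; omega)]
      exact hδdiag i0 (Sum.inr (Sum.inr i))

/-- **Lemma 8 (i).** Every integer square matrix `P` with `P² = I` is integrally similar to
`F(x, y, z)` for some nonnegative integers `x, y, z`. -/
theorem statement12 (N : ℕ) (P : Matrix (Fin N) (Fin N) ℤ) (hP : P * P = 1) :
    ∃ (x y z : ℕ) (h : 2*x + y + z = N) (S : (Matrix (Fin N) (Fin N) ℤ)ˣ),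
      (↑S⁻¹ : Matrix (Fin N) (Fin N) ℤ) * P * (↑S : Matrix (Fin N) (Fin N) ℤ)
        = Matrix.reindex (finCongr h) (finCongr h) (Fmat x y z) := by
  classical
  set e : Module.Basis (Fin N) ℤ (Fin N → ℤ) := Pi.basisFun ℤ (Fin N) with he
  set f : (Fin N → ℤ) →ₗ[ℤ] (Fin N → ℤ) := Matrix.toLin e e P with hf
  have hff : ∀ v, f (f v) = v := by
    intro v
    have h : f ∘ₗ f = LinearMap.id := by
      rw [hf, ← Matrix.toLin_mul e e e P P, hP, Matrix.toLin_one]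
    have := LinearMap.congr_fun h v
    simpa using this
  obtain ⟨x, y, z, b, hb⟩ := aux (Fin N → ℤ) f hff
  have h : 2*x + y + z = N := by
    have hcard := Fintype.card_congr (b.indexEquiv e)
    simpa using hcard
  refine ⟨x, y, z, h, ⟨e.toMatrix (b.reindex (finCongr h)), (b.reindex (finCongr h)).toMatrix e,
    Module.Basis.toMatrix_mul_toMatrix_flip _ _, Module.Basis.toMatrix_mul_toMatrix_flip _ _⟩, ?_⟩
  show (b.reindex (finCongr h)).toMatrix e * P * e.toMatrix (b.reindex (finCongr h)) = _
  have hPf : P = LinearMap.toMatrix e e f := by rw [hf, LinearMap.toMatrix_toLin]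
  rw [hPf, basis_toMatrix_mul_linearMap_toMatrix_mul_basis_toMatrix]
  ext κ κ'
  rw [LinearMap.toMatrix_apply, Matrix.reindex_apply, Matrix.submatrix_apply,
    Module.Basis.reindex_apply, Module.Basis.repr_reindex_apply, ← hb, LinearMap.toMatrix_apply]

end
end

section
/- Let x, y, z and p, q, r be nonnegative integers with 2x + y + z = 2p + q + r = N. If there exists S ∈ GL(N, ℤ) with S⁻¹·F(x,y,z)·S = F(p,q,r), then (x, y, z) = (p, q, r). -/
open CategoryTheory AlgebraicTopology Finset

noncomputable section

/-- Number of solutions of `A.mulVec v = 0`. -/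
def kerCard {n : Type*} [Fintype n] [DecidableEq n] {R : Type*} [CommRing R] [Fintype R]
    [DecidableEq R] (A : Matrix n n R) : ℕ :=
  Fintype.card {v : n → R // A.mulVec v = 0}

lemma kerCard_conj' {n : Type*} [Fintype n] [DecidableEq n] {R : Type*} [CommRing R] [Fintype R]
    [DecidableEq R] (U V A : Matrix n n R) (hUV : U * V = 1) (hVU : V * U = 1) :
    kerCard (V * A * U) = kerCard A := by
  apply Fintype.card_congr
  have key : ∀ v : n → R, (V * A * U).mulVec v = 0 ↔ A.mulVec (U.mulVec v) = 0 := by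
    intro v
    rw [Matrix.mulVec_mulVec]
    constructor
    · intro hv
      have h2 : U.mulVec ((V * A * U).mulVec v) = 0 := by rw [hv]; simp
      rwa [Matrix.mulVec_mulVec, ← mul_assoc, ← mul_assoc, hUV, one_mul] at h2
    · intro hv
      have h2 : V.mulVec ((A * U).mulVec v) = 0 := by rw [hv]; simp
      rwa [Matrix.mulVec_mulVec, ← mul_assoc] at h2
  refine Equiv.mk (fun v => ⟨U.mulVec v.1, (key v.1).mp v.2⟩)
    (fun w => ⟨V.mulVec w.1, (key _).mpr ?_⟩) ?_ ?_
  · have hA : A * U * V = A := by rw [mul_assoc, hUV, mul_one]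
    rw [Matrix.mulVec_mulVec, Matrix.mulVec_mulVec, hA]; exact w.2
  · intro v
    apply Subtype.ext
    show V.mulVec (U.mulVec v.1) = v.1
    rw [Matrix.mulVec_mulVec, hVU, Matrix.one_mulVec]
  · intro w
    apply Subtype.ext
    show U.mulVec (V.mulVec w.1) = w.1
    rw [Matrix.mulVec_mulVec, hUV, Matrix.one_mulVec]

lemma kerCard_reindex {m n : Type*} [Fintype m] [DecidableEq m] [Fintype n] [DecidableEq n]
    {R : Type*} [CommRing R] [Fintype R] [DecidableEq R] (e : m ≃ n) (A : Matrix m m R) :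
    kerCard (Matrix.reindex e e A) = kerCard A := by
  apply Fintype.card_congr
  have key : ∀ v : n → R, (Matrix.reindex e e A).mulVec v = 0 ↔ A.mulVec (v ∘ e) = 0 := by
    intro v
    have hfor : ∀ i : m, (Matrix.reindex e e A).mulVec v (e i) = A.mulVec (v ∘ e) i := by
      intro i
      simp only [Matrix.mulVec, dotProduct, Matrix.reindex_apply, Matrix.submatrix_apply,
        Equiv.symm_apply_apply, Function.comp_apply]
      exact (Fintype.sum_equiv e (fun j => A i j * v (e j))
        (fun j => A i (e.symm j) * v j)
        (fun j => by show A i j * v (e j) = A i (e.symm (e j)) * v (e j)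
                     rw [Equiv.symm_apply_apply])).symm
    constructor
    · intro hv; funext i; rw [← hfor]; exact congrFun hv (e i)
    · intro hv; funext j
      have h2 := hfor (e.symm j)
      rw [Equiv.apply_symm_apply] at h2
      rw [h2]; exact congrFun hv (e.symm j)
  refine Equiv.mk (fun v => ⟨v.1 ∘ e, (key v.1).mp v.2⟩)
    (fun w => ⟨w.1 ∘ e.symm, (key _).mpr ?_⟩) ?_ ?_
  · have h3 : (w.1 ∘ e.symm) ∘ e = w.1 := by funext i; simp
    rw [h3]; exact w.2
  · intro v; apply Subtype.ext; funext i; simp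
  · intro w; apply Subtype.ext; funext i; simp

lemma fmat_mulVec (x y z : ℕ) (v : Fin (2*x+y+z) → ZMod 4) (i : Fin (2*x+y+z)) :
    ((Fmat x y z).map (Int.cast : ℤ → ZMod 4)).mulVec v i =
      if h : (i:ℕ) < 2*x then v ⟨2*((i:ℕ)/2) + (1 - (i:ℕ)%2), by have := i.isLt; omega⟩
      else if (i:ℕ) < 2*x+y then v i else -(v i) := by
  have hi := i.isLt
  simp only [Matrix.mulVec, dotProduct, Matrix.map_apply, Fmat, Matrix.of_apply]
  by_cases h : (i:ℕ) < 2*x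
  · rw [dif_pos h]
    set t : Fin (2*x+y+z) := ⟨2*((i:ℕ)/2) + (1 - (i:ℕ)%2), by omega⟩ with ht
    have hsum : ∀ j : Fin (2*x+y+z),
        ((if (i : ℕ) < 2*x then (if (j : ℕ) = 2*((i : ℕ)/2) + (1 - (i : ℕ) % 2) then (1:ℤ) else 0)
          else if j = i then (if (i : ℕ) < 2*x + y then 1 else -1) else 0 : ℤ) : ZMod 4) * v j
        = if j = t then v j else 0 := by
      intro j
      rw [if_pos h]
      by_cases hj : j = t
      · rw [if_pos hj, if_pos (by rw [hj])]
        simp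
      · rw [if_neg hj, if_neg (fun hc => hj (Fin.ext hc))]
        simp
    rw [Finset.sum_congr rfl (fun j _ => hsum j), Finset.sum_ite_eq' Finset.univ t v]
    simp
  · rw [dif_neg h]
    have hsum : ∀ j : Fin (2*x+y+z),
        ((if (i : ℕ) < 2*x then (if (j : ℕ) = 2*((i : ℕ)/2) + (1 - (i : ℕ) % 2) then (1:ℤ) else 0)
          else if j = i then (if (i : ℕ) < 2*x + y then 1 else -1) else 0 : ℤ) : ZMod 4) * v j
        = if j = i then (if (i:ℕ) < 2*x+y then v j else -(v j)) else 0 := by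
      intro j
      rw [if_neg h]
      by_cases hj : j = i
      · rw [if_pos hj, if_pos hj]
        by_cases hy : (i:ℕ) < 2*x+y
        · rw [if_pos hy, if_pos hy]; simp
        · rw [if_neg hy, if_neg hy]; simp
      · rw [if_neg hj, if_neg hj]; simp
    rw [Finset.sum_congr rfl (fun j _ => hsum j), Finset.sum_ite_eq' Finset.univ i
      (fun j => if (i:ℕ) < 2*x+y then v j else -(v j))]
    simp

abbrev T4 : Type := {a : ZMod 4 // a + a = 0}

lemma card_T4 : Fintype.card T4 = 2 := by decide

lemma mem_ker_sub_iff (x y z : ℕ) (v : Fin (2*x+y+z) → ZMod 4) :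
    ((Fmat x y z).map (Int.cast : ℤ → ZMod 4) - 1).mulVec v = 0 ↔
      (∀ i : Fin (2*x+y+z), ∀ hi : (i:ℕ) < 2*x,
          v ⟨2*((i:ℕ)/2) + (1 - (i:ℕ)%2), by have := i.isLt; omega⟩ = v i)
      ∧ (∀ i : Fin (2*x+y+z), 2*x+y ≤ (i:ℕ) → v i + v i = 0) := by
  have hmv : ∀ i, ((Fmat x y z).map (Int.cast : ℤ → ZMod 4) - 1).mulVec v i
      = ((Fmat x y z).map (Int.cast : ℤ → ZMod 4)).mulVec v i - v i := by
    intro i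
    rw [Matrix.sub_mulVec, Pi.sub_apply, Matrix.one_mulVec]
  rw [funext_iff]
  constructor
  · intro H
    constructor
    · intro i hi
      have h1 := H i
      rw [hmv, fmat_mulVec, dif_pos hi] at h1
      simpa [sub_eq_zero] using h1
    · intro i hi
      have h1 := H i
      rw [hmv, fmat_mulVec, dif_neg (by omega), if_neg (by omega)] at h1
      have h2 : -(v i) - v i = 0 := h1
      linear_combination -h2
  · intro ⟨H1, H2⟩ i
    rw [hmv, fmat_mulVec]
    simp only [Pi.zero_apply]
    by_cases h : (i:ℕ) < 2*x
    · rw [dif_pos h, H1 i h, sub_self]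
    · rw [dif_neg h]
      by_cases hy : (i:ℕ) < 2*x+y
      · rw [if_pos hy, sub_self]
      · rw [if_neg hy]
        have h2 := H2 i (by omega)
        linear_combination -h2

lemma mem_ker_add_iff (x y z : ℕ) (v : Fin (2*x+y+z) → ZMod 4) :
    ((Fmat x y z).map (Int.cast : ℤ → ZMod 4) + 1).mulVec v = 0 ↔
      (∀ i : Fin (2*x+y+z), ∀ hi : (i:ℕ) < 2*x,
          v ⟨2*((i:ℕ)/2) + (1 - (i:ℕ)%2), by have := i.isLt; omega⟩ + v i = 0)
      ∧ (∀ i : Fin (2*x+y+z), 2*x ≤ (i:ℕ) → (i:ℕ) < 2*x+y → v i + v i = 0) := by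
  have hmv : ∀ i, ((Fmat x y z).map (Int.cast : ℤ → ZMod 4) + 1).mulVec v i
      = ((Fmat x y z).map (Int.cast : ℤ → ZMod 4)).mulVec v i + v i := by
    intro i
    rw [Matrix.add_mulVec, Pi.add_apply, Matrix.one_mulVec]
  rw [funext_iff]
  constructor
  · intro H
    constructor
    · intro i hi
      have h1 := H i
      rw [hmv, fmat_mulVec, dif_pos hi] at h1
      exact h1
    · intro i hi hy
      have h1 := H i
      rw [hmv, fmat_mulVec, dif_neg (by omega), if_pos hy] at h1
      exact h1
  · intro ⟨H1, H2⟩ i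
    rw [hmv, fmat_mulVec]
    simp only [Pi.zero_apply]
    by_cases h : (i:ℕ) < 2*x
    · rw [dif_pos h]
      exact H1 i h
    · rw [dif_neg h]
      by_cases hy : (i:ℕ) < 2*x+y
      · rw [if_pos hy]
        exact H2 i (by omega) hy
      · rw [if_neg hy]
        linear_combination (0 : ZMod 4)

def unpack1 (x y z : ℕ) (d : (Fin x → ZMod 4) × (Fin y → ZMod 4) × (Fin z → T4)) :
    Fin (2*x+y+z) → ZMod 4 := fun i =>
  if h : (i:ℕ) < 2*x then d.1 ⟨(i:ℕ)/2, by omega⟩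
  else if h2 : (i:ℕ) < 2*x+y then d.2.1 ⟨(i:ℕ)-2*x, by omega⟩
  else (d.2.2 ⟨(i:ℕ)-(2*x+y), by have := i.isLt; omega⟩).1

lemma unpack1_lt (x y z : ℕ) (d) (i : Fin (2*x+y+z)) (h : (i:ℕ) < 2*x) :
    unpack1 x y z d i = d.1 ⟨(i:ℕ)/2, by omega⟩ := by
  simp only [unpack1]; rw [dif_pos h]

lemma unpack1_mid (x y z : ℕ) (d) (i : Fin (2*x+y+z)) (h : ¬ (i:ℕ) < 2*x)
    (h2 : (i:ℕ) < 2*x+y) :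
    unpack1 x y z d i = d.2.1 ⟨(i:ℕ)-2*x, by omega⟩ := by
  simp only [unpack1]; rw [dif_neg h, dif_pos h2]

lemma unpack1_hi (x y z : ℕ) (d) (i : Fin (2*x+y+z)) (h : ¬ (i:ℕ) < 2*x)
    (h2 : ¬ (i:ℕ) < 2*x+y) :
    unpack1 x y z d i = (d.2.2 ⟨(i:ℕ)-(2*x+y), by have := i.isLt; omega⟩).1 := by
  simp only [unpack1]; rw [dif_neg h, dif_neg h2]


set_option maxHeartbeats 1000000 in
lemma unpack1_mem (x y z : ℕ) (d : (Fin x → ZMod 4) × (Fin y → ZMod 4) × (Fin z → T4)) :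
    ((Fmat x y z).map (Int.cast : ℤ → ZMod 4) - 1).mulVec (unpack1 x y z d) = 0 := by
  rw [mem_ker_sub_iff]
  constructor
  · intro i hi
    rw [unpack1_lt x y z d ⟨2*((i:ℕ)/2) + (1 - (i:ℕ)%2), by have := i.isLt; omega⟩
        (by show 2*((i:ℕ)/2) + (1 - (i:ℕ)%2) < 2*x; omega),
      unpack1_lt x y z d i hi]
    exact congrArg d.1 (Fin.ext (by show (2*((i:ℕ)/2) + (1 - (i:ℕ)%2))/2 = (i:ℕ)/2; omega))
  · intro i hi
    rw [unpack1_hi x y z d i (by omega) (by omega)]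
    exact (d.2.2 _).2

set_option maxHeartbeats 1600000 in
lemma count_sub (x y z : ℕ) :
    Fintype.card {v : Fin (2*x+y+z) → ZMod 4 //
        ((Fmat x y z).map (Int.cast : ℤ → ZMod 4) - 1).mulVec v = 0}
      = 4^(x+y) * 2^z := by
  have e : ((Fin x → ZMod 4) × (Fin y → ZMod 4) × (Fin z → T4)) ≃
      {v : Fin (2*x+y+z) → ZMod 4 //
        ((Fmat x y z).map (Int.cast : ℤ → ZMod 4) - 1).mulVec v = 0} := by
    refine Equiv.mk
      (fun d => ⟨unpack1 x y z d, unpack1_mem x y z d⟩)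
      (fun v => (fun k => v.1 ⟨2*(k:ℕ), by have := k.isLt; omega⟩,
                 fun k => v.1 ⟨2*x+(k:ℕ), by have := k.isLt; omega⟩,
                 fun k => ⟨v.1 ⟨2*x+y+(k:ℕ), by have := k.isLt; omega⟩,
                   ((mem_ker_sub_iff x y z v.1).mp v.2).2
                     ⟨2*x+y+(k:ℕ), by have := k.isLt; omega⟩
                     (by show 2*x+y ≤ 2*x+y+(k:ℕ); omega)⟩))
      ?_ ?_
    · intro d
      refine Prod.ext ?_ (Prod.ext ?_ ?_)
      · funext k
        have hk := k.isLt
        show unpack1 x y z d ⟨2*(k:ℕ), by omega⟩ = d.1 k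
        rw [unpack1_lt x y z d ⟨2*(k:ℕ), by omega⟩ (by show 2*(k:ℕ) < 2*x; omega)]
        exact congrArg d.1 (Fin.ext (by show (2*(k:ℕ))/2 = (k:ℕ); omega))
      · funext k
        have hk := k.isLt
        show unpack1 x y z d ⟨2*x+(k:ℕ), by omega⟩ = d.2.1 k
        rw [unpack1_mid x y z d ⟨2*x+(k:ℕ), by omega⟩ (by show ¬ 2*x+(k:ℕ) < 2*x; omega)
          (by show 2*x+(k:ℕ) < 2*x+y; omega)]
        exact congrArg d.2.1 (Fin.ext (by show 2*x+(k:ℕ)-2*x = (k:ℕ); omega))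
      · funext k
        have hk := k.isLt
        apply Subtype.ext
        show unpack1 x y z d _ = (d.2.2 k).1
        rw [unpack1_hi x y z d ⟨2*x+y+(k:ℕ), by omega⟩
          (by show ¬ 2*x+y+(k:ℕ) < 2*x; omega) (by show ¬ 2*x+y+(k:ℕ) < 2*x+y; omega)]
        exact congrArg (fun t => (d.2.2 t).1) (Fin.ext (by show 2*x+y+(k:ℕ)-(2*x+y) = (k:ℕ); omega))
    · intro v
      apply Subtype.ext
      funext i
      have hi := i.isLt
      have hker := (mem_ker_sub_iff x y z v.1).mp v.2
      show unpack1 x y z _ i = v.1 i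
      by_cases h : (i:ℕ) < 2*x
      · rw [unpack1_lt x y z _ i h]
        show v.1 ⟨2*((i:ℕ)/2), by omega⟩ = v.1 i
        rcases Nat.mod_two_eq_zero_or_one (i:ℕ) with hm | hm
        · exact congrArg v.1 (Fin.ext (by show 2*((i:ℕ)/2) = (i:ℕ); omega))
        · have h1 := hker.1 i h
          rw [show (⟨2*((i:ℕ)/2) + (1 - (i:ℕ)%2), by omega⟩ :
              Fin (2*x+y+z)) = ⟨2*((i:ℕ)/2), by omega⟩ from
            Fin.ext (by show 2*((i:ℕ)/2) + (1 - (i:ℕ)%2) = 2*((i:ℕ)/2); omega)] at h1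
          exact h1
      · by_cases h2 : (i:ℕ) < 2*x+y
        · rw [unpack1_mid x y z _ i h h2]
          exact congrArg v.1 (Fin.ext (by show 2*x+((i:ℕ)-2*x) = (i:ℕ); omega))
        · rw [unpack1_hi x y z _ i h h2]
          exact congrArg v.1 (Fin.ext (by show 2*x+y+((i:ℕ)-(2*x+y)) = (i:ℕ); omega))
  rw [← Fintype.card_congr e]
  rw [Fintype.card_prod, Fintype.card_prod, Fintype.card_fun, Fintype.card_fun,
    Fintype.card_fun, card_T4, Fintype.card_fin, Fintype.card_fin, Fintype.card_fin]
  have h4 : Fintype.card (ZMod 4) = 4 := rfl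
  rw [h4, pow_add]
  ring

def unpack2 (x y z : ℕ) (d : (Fin x → ZMod 4) × (Fin y → T4) × (Fin z → ZMod 4)) :
    Fin (2*x+y+z) → ZMod 4 := fun i =>
  if h : (i:ℕ) < 2*x then
    (if (i:ℕ) % 2 = 0 then d.1 ⟨(i:ℕ)/2, by omega⟩ else -d.1 ⟨(i:ℕ)/2, by omega⟩)
  else if h2 : (i:ℕ) < 2*x+y then (d.2.1 ⟨(i:ℕ)-2*x, by omega⟩).1
  else d.2.2 ⟨(i:ℕ)-(2*x+y), by have := i.isLt; omega⟩

lemma unpack2_lt (x y z : ℕ) (d) (i : Fin (2*x+y+z)) (h : (i:ℕ) < 2*x) :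
    unpack2 x y z d i
      = (if (i:ℕ) % 2 = 0 then d.1 ⟨(i:ℕ)/2, by omega⟩ else -d.1 ⟨(i:ℕ)/2, by omega⟩) := by
  simp only [unpack2]; rw [dif_pos h]

lemma unpack2_mid (x y z : ℕ) (d) (i : Fin (2*x+y+z)) (h : ¬ (i:ℕ) < 2*x)
    (h2 : (i:ℕ) < 2*x+y) :
    unpack2 x y z d i = (d.2.1 ⟨(i:ℕ)-2*x, by omega⟩).1 := by
  simp only [unpack2]; rw [dif_neg h, dif_pos h2]

lemma unpack2_hi (x y z : ℕ) (d) (i : Fin (2*x+y+z)) (h : ¬ (i:ℕ) < 2*x)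
    (h2 : ¬ (i:ℕ) < 2*x+y) :
    unpack2 x y z d i = d.2.2 ⟨(i:ℕ)-(2*x+y), by have := i.isLt; omega⟩ := by
  simp only [unpack2]; rw [dif_neg h, dif_neg h2]

lemma unpack2_even (x y z : ℕ) (d) (i : Fin (2*x+y+z)) (h : (i:ℕ) < 2*x)
    (hm : (i:ℕ) % 2 = 0) :
    unpack2 x y z d i = d.1 ⟨(i:ℕ)/2, by omega⟩ := by
  rw [unpack2_lt x y z d i h, if_pos hm]

lemma unpack2_odd (x y z : ℕ) (d) (i : Fin (2*x+y+z)) (h : (i:ℕ) < 2*x)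
    (hm : (i:ℕ) % 2 = 1) :
    unpack2 x y z d i = -d.1 ⟨(i:ℕ)/2, by omega⟩ := by
  rw [unpack2_lt x y z d i h, if_neg (by omega)]

set_option maxHeartbeats 1600000 in
lemma unpack2_mem (x y z : ℕ) (d : (Fin x → ZMod 4) × (Fin y → T4) × (Fin z → ZMod 4)) :
    ((Fmat x y z).map (Int.cast : ℤ → ZMod 4) + 1).mulVec (unpack2 x y z d) = 0 := by
  rw [mem_ker_add_iff]
  constructor
  · intro i hi
    have hit := i.isLt
    rcases Nat.mod_two_eq_zero_or_one (i:ℕ) with hm | hm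
    · rw [unpack2_odd x y z d ⟨2*((i:ℕ)/2) + (1 - (i:ℕ)%2), by omega⟩
          (by show 2*((i:ℕ)/2) + (1 - (i:ℕ)%2) < 2*x; omega)
          (by show (2*((i:ℕ)/2) + (1 - (i:ℕ)%2)) % 2 = 1; omega),
        unpack2_even x y z d i hi hm]
      rw [show (⟨(((⟨2*((i:ℕ)/2) + (1 - (i:ℕ)%2), by omega⟩ : Fin (2*x+y+z)) : ℕ))/2,
          by show (2*((i:ℕ)/2) + (1 - (i:ℕ)%2))/2 < x; omega⟩ : Fin x) = ⟨(i:ℕ)/2, by omega⟩ from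
        Fin.ext (by show (2*((i:ℕ)/2) + (1 - (i:ℕ)%2))/2 = (i:ℕ)/2; omega)]
      exact neg_add_cancel _
    · rw [unpack2_even x y z d ⟨2*((i:ℕ)/2) + (1 - (i:ℕ)%2), by omega⟩
          (by show 2*((i:ℕ)/2) + (1 - (i:ℕ)%2) < 2*x; omega)
          (by show (2*((i:ℕ)/2) + (1 - (i:ℕ)%2)) % 2 = 0; omega),
        unpack2_odd x y z d i hi hm]
      rw [show (⟨(((⟨2*((i:ℕ)/2) + (1 - (i:ℕ)%2), by omega⟩ : Fin (2*x+y+z)) : ℕ))/2,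
          by show (2*((i:ℕ)/2) + (1 - (i:ℕ)%2))/2 < x; omega⟩ : Fin x) = ⟨(i:ℕ)/2, by omega⟩ from
        Fin.ext (by show (2*((i:ℕ)/2) + (1 - (i:ℕ)%2))/2 = (i:ℕ)/2; omega)]
      exact add_neg_cancel _
  · intro i hi hy
    rw [unpack2_mid x y z d i (by omega) hy]
    exact (d.2.1 _).2

set_option maxHeartbeats 1600000 in
lemma count_add (x y z : ℕ) :
    Fintype.card {v : Fin (2*x+y+z) → ZMod 4 //
        ((Fmat x y z).map (Int.cast : ℤ → ZMod 4) + 1).mulVec v = 0}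
      = 4^(x+z) * 2^y := by
  have e : ((Fin x → ZMod 4) × (Fin y → T4) × (Fin z → ZMod 4)) ≃
      {v : Fin (2*x+y+z) → ZMod 4 //
        ((Fmat x y z).map (Int.cast : ℤ → ZMod 4) + 1).mulVec v = 0} := by
    refine Equiv.mk
      (fun d => ⟨unpack2 x y z d, unpack2_mem x y z d⟩)
      (fun v => (fun k => v.1 ⟨2*(k:ℕ), by have := k.isLt; omega⟩,
                 fun k => ⟨v.1 ⟨2*x+(k:ℕ), by have := k.isLt; omega⟩,
                   ((mem_ker_add_iff x y z v.1).mp v.2).2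
                     ⟨2*x+(k:ℕ), by have := k.isLt; omega⟩
                     (by show 2*x ≤ 2*x+(k:ℕ); omega)
                     (by show 2*x+(k:ℕ) < 2*x+y; have := k.isLt; omega)⟩,
                 fun k => v.1 ⟨2*x+y+(k:ℕ), by have := k.isLt; omega⟩))
      ?_ ?_
    · intro d
      refine Prod.ext ?_ (Prod.ext ?_ ?_)
      · funext k
        have hk := k.isLt
        show unpack2 x y z d ⟨2*(k:ℕ), by omega⟩ = d.1 k
        rw [unpack2_even x y z d ⟨2*(k:ℕ), by omega⟩ (by show 2*(k:ℕ) < 2*x; omega)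
          (by show 2*(k:ℕ) % 2 = 0; omega)]
        exact congrArg d.1 (Fin.ext (by show (2*(k:ℕ))/2 = (k:ℕ); omega))
      · funext k
        have hk := k.isLt
        apply Subtype.ext
        show unpack2 x y z d ⟨2*x+(k:ℕ), by omega⟩ = (d.2.1 k).1
        rw [unpack2_mid x y z d ⟨2*x+(k:ℕ), by omega⟩ (by show ¬ 2*x+(k:ℕ) < 2*x; omega)
          (by show 2*x+(k:ℕ) < 2*x+y; omega)]
        exact congrArg (fun t => (d.2.1 t).1) (Fin.ext (by show 2*x+(k:ℕ)-2*x = (k:ℕ); omega))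
      · funext k
        have hk := k.isLt
        show unpack2 x y z d ⟨2*x+y+(k:ℕ), by omega⟩ = d.2.2 k
        rw [unpack2_hi x y z d ⟨2*x+y+(k:ℕ), by omega⟩
          (by show ¬ 2*x+y+(k:ℕ) < 2*x; omega) (by show ¬ 2*x+y+(k:ℕ) < 2*x+y; omega)]
        exact congrArg d.2.2 (Fin.ext (by show 2*x+y+(k:ℕ)-(2*x+y) = (k:ℕ); omega))
    · intro v
      apply Subtype.ext
      funext i
      have hi := i.isLt
      have hker := (mem_ker_add_iff x y z v.1).mp v.2
      show unpack2 x y z _ i = v.1 i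
      by_cases h : (i:ℕ) < 2*x
      · rcases Nat.mod_two_eq_zero_or_one (i:ℕ) with hm | hm
        · rw [unpack2_even x y z _ i h hm]
          show v.1 ⟨2*((i:ℕ)/2), by omega⟩ = v.1 i
          exact congrArg v.1 (Fin.ext (by show 2*((i:ℕ)/2) = (i:ℕ); omega))
        · rw [unpack2_odd x y z _ i h hm]
          show -(v.1 ⟨2*((i:ℕ)/2), by omega⟩) = v.1 i
          have h1 := hker.1 i h
          rw [show (⟨2*((i:ℕ)/2) + (1 - (i:ℕ)%2), by omega⟩ :
              Fin (2*x+y+z)) = ⟨2*((i:ℕ)/2), by omega⟩ from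
            Fin.ext (by show 2*((i:ℕ)/2) + (1 - (i:ℕ)%2) = 2*((i:ℕ)/2); omega)] at h1
          linear_combination -h1
      · by_cases h2 : (i:ℕ) < 2*x+y
        · rw [unpack2_mid x y z _ i h h2]
          exact congrArg v.1 (Fin.ext (by show 2*x+((i:ℕ)-2*x) = (i:ℕ); omega))
        · rw [unpack2_hi x y z _ i h h2]
          exact congrArg v.1 (Fin.ext (by show 2*x+y+((i:ℕ)-(2*x+y)) = (i:ℕ); omega))
  rw [← Fintype.card_congr e]
  rw [Fintype.card_prod, Fintype.card_prod, Fintype.card_fun, Fintype.card_fun,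
    Fintype.card_fun, card_T4, Fintype.card_fin, Fintype.card_fin, Fintype.card_fin]
  have h4 : Fintype.card (ZMod 4) = 4 := rfl
  rw [h4, pow_add]
  ring

lemma reindex_sub_one {m n : Type*} [Fintype m] [DecidableEq m] [Fintype n] [DecidableEq n]
    {R : Type*} [CommRing R] (e : m ≃ n) (A : Matrix m m R) :
    Matrix.reindex e e A - 1 = Matrix.reindex e e (A - 1) := by
  ext i j
  by_cases hij : i = j
  · subst hij
    simp [Matrix.reindex_apply, Matrix.submatrix_apply, Matrix.one_apply]
  · have : e.symm i ≠ e.symm j := fun hc => hij (by simpa using congrArg e hc)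
    simp [Matrix.reindex_apply, Matrix.submatrix_apply, Matrix.one_apply, hij, this]

lemma reindex_add_one {m n : Type*} [Fintype m] [DecidableEq m] [Fintype n] [DecidableEq n]
    {R : Type*} [CommRing R] (e : m ≃ n) (A : Matrix m m R) :
    Matrix.reindex e e A + 1 = Matrix.reindex e e (A + 1) := by
  ext i j
  by_cases hij : i = j
  · subst hij
    simp [Matrix.reindex_apply, Matrix.submatrix_apply, Matrix.one_apply]
  · have : e.symm i ≠ e.symm j := fun hc => hij (by simpa using congrArg e hc)
    simp [Matrix.reindex_apply, Matrix.submatrix_apply, Matrix.one_apply, hij, this]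

/-- **Lemma 8 (ii).** If `F(x,y,z)` and `F(p,q,r)` are integrally similar then
`(x, y, z) = (p, q, r)`. -/
theorem statement13 (x y z p q r N : ℕ) (hxyz : 2*x + y + z = N) (hpqr : 2*p + q + r = N)
    (S : (Matrix (Fin N) (Fin N) ℤ)ˣ)
    (h : (↑S⁻¹ : Matrix (Fin N) (Fin N) ℤ) *
        (Matrix.reindex (finCongr hxyz) (finCongr hxyz) (Fmat x y z)) *
        (↑S : Matrix (Fin N) (Fin N) ℤ)
      = Matrix.reindex (finCongr hpqr) (finCongr hpqr) (Fmat p q r)) :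
    (x, y, z) = (p, q, r) := by
  classical
  set φ : ℤ →+* ZMod 4 := Int.castRingHom (ZMod 4) with hφ
  set Φ : Matrix (Fin N) (Fin N) ℤ →+* Matrix (Fin N) (Fin N) (ZMod 4) := φ.mapMatrix with hΦ
  set U : Matrix (Fin N) (Fin N) (ZMod 4) := Φ ↑S with hU
  set V : Matrix (Fin N) (Fin N) (ZMod 4) := Φ ↑S⁻¹ with hV
  have hUV : U * V = 1 := by rw [hU, hV, ← map_mul, S.mul_inv, map_one]
  have hVU : V * U = 1 := by rw [hU, hV, ← map_mul, S.inv_mul, map_one]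
  set A : Matrix (Fin N) (Fin N) (ZMod 4) :=
    Φ (Matrix.reindex (finCongr hxyz) (finCongr hxyz) (Fmat x y z)) with hA
  set B : Matrix (Fin N) (Fin N) (ZMod 4) :=
    Φ (Matrix.reindex (finCongr hpqr) (finCongr hpqr) (Fmat p q r)) with hB
  have h4 : V * A * U = B := by
    rw [hA, hB, hU, hV, ← map_mul, ← map_mul, h]
  -- transport map through reindex
  have hAr : A = Matrix.reindex (finCongr hxyz) (finCongr hxyz)
      ((Fmat x y z).map (Int.cast : ℤ → ZMod 4)) := by
    rw [hA, RingHom.mapMatrix_apply]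
    ext i j
    simp [Matrix.reindex_apply, Matrix.submatrix_apply, Matrix.map_apply, hφ]
  have hBr : B = Matrix.reindex (finCongr hpqr) (finCongr hpqr)
      ((Fmat p q r).map (Int.cast : ℤ → ZMod 4)) := by
    rw [hB, RingHom.mapMatrix_apply]
    ext i j
    simp [Matrix.reindex_apply, Matrix.submatrix_apply, Matrix.map_apply, hφ]
  -- the two kernel-count identities
  have conjsub : V * (A - 1) * U = B - 1 := by
    rw [mul_sub, sub_mul, mul_one, hVU, h4]
  have conjadd : V * (A + 1) * U = B + 1 := by
    rw [mul_add, add_mul, mul_one, hVU, h4]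
  have keq1 : kerCard (A - 1) = kerCard (B - 1) := by
    rw [← conjsub, kerCard_conj' U V _ hUV hVU]
  have keq2 : kerCard (A + 1) = kerCard (B + 1) := by
    rw [← conjadd, kerCard_conj' U V _ hUV hVU]
  have cA1 : kerCard (A - 1) = 4^(x+y) * 2^z := by
    rw [hAr, reindex_sub_one, kerCard_reindex]
    exact count_sub x y z
  have cB1 : kerCard (B - 1) = 4^(p+q) * 2^r := by
    rw [hBr, reindex_sub_one, kerCard_reindex]
    exact count_sub p q r
  have cA2 : kerCard (A + 1) = 4^(x+z) * 2^y := by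
    rw [hAr, reindex_add_one, kerCard_reindex]
    exact count_add x y z
  have cB2 : kerCard (B + 1) = 4^(p+r) * 2^q := by
    rw [hBr, reindex_add_one, kerCard_reindex]
    exact count_add p q r
  have e1 : (4:ℕ)^(x+y) * 2^z = 4^(p+q) * 2^r := by rw [← cA1, keq1, cB1]
  have e2 : (4:ℕ)^(x+z) * 2^y = 4^(p+r) * 2^q := by rw [← cA2, keq2, cB2]
  have p1 : (2:ℕ)^(2*(x+y)+z) = 2^(2*(p+q)+r) := by
    rw [pow_add, pow_add, pow_mul, pow_mul]
    norm_num at e1 ⊢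
    exact e1
  have p2 : (2:ℕ)^(2*(x+z)+y) = 2^(2*(p+r)+q) := by
    rw [pow_add, pow_add, pow_mul, pow_mul]
    norm_num at e2 ⊢
    exact e2
  have q1 := Nat.pow_right_injective (le_refl 2) p1
  have q2 := Nat.pow_right_injective (le_refl 2) p2
  have : x = p ∧ y = q ∧ z = r := by omega
  simp [this.1, this.2.1, this.2.2]


end
end

section
/- For every integer m ≥ 1, Σ_{i=0}^{⌊(m−1)/2⌋} (−1)^i·C(2m, m−1−2i) = Σ_{i=0}^{m−1} 2^{m−1−i}·C(2i, i). Equivalently, Σ_{k=0}^{m} C(2m, k)·sin((m−k)π/2) = Σ_{k=0}^{m−1} 2^{m−1−k}·C(2k, k). -/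
open CategoryTheory AlgebraicTopology Finset

noncomputable section

def Paux (n k : ℕ) : ℤ := ∑ j ∈ Finset.range (k/2 + 1), (-1)^j * (n.choose (k - 2*j))

lemma Paux_pascal (n k : ℕ) : Paux (n+1) (k+1) = Paux n (k+1) + Paux n k := by
  rcases Nat.even_or_odd k with ⟨t, ht⟩ | ⟨t, ht⟩
  · subst ht
    have h1 : (t+t+1)/2 + 1 = t + 1 := by omega
    have h2 : (t+t)/2 + 1 = t + 1 := by omega
    simp only [Paux, h1, h2, ← Finset.sum_add_distrib]
    apply Finset.sum_congr rfl
    intro j hj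
    simp only [Finset.mem_range] at hj
    have h3 : t+t+1 - 2*j = (t+t-2*j) + 1 := by omega
    rw [h3, Nat.choose_succ_succ]
    push_cast
    ring
  · subst ht
    have h1 : (2*t+1+1)/2 + 1 = (t + 1) + 1 := by omega
    have h2 : (2*t+1)/2 + 1 = t + 1 := by omega
    simp only [Paux, h1, h2]
    rw [Finset.sum_range_succ, Finset.sum_range_succ (n := t+1)]
    have h0 : 2*t+1+1 - 2*(t+1) = 0 := by omega
    rw [h0]
    rw [show ∑ j ∈ Finset.range (t+1), ((-1:ℤ))^j * ((n+1).choose (2*t+1+1 - 2*j))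
        = ∑ j ∈ Finset.range (t+1), ((-1:ℤ)^j * (n.choose (2*t+1+1-2*j)) + (-1:ℤ)^j * (n.choose (2*t+1-2*j))) from ?_]
    · rw [Finset.sum_add_distrib]
      simp only [Nat.choose_zero_right, Nat.cast_one]
      ring
    · apply Finset.sum_congr rfl
      intro j hj
      simp only [Finset.mem_range] at hj
      have h3 : 2*t+1+1 - 2*j = (2*t+1-2*j) + 1 := by omega
      rw [h3, Nat.choose_succ_succ]
      push_cast
      ring

lemma Paux_add_two (n k : ℕ) : Paux n (k+2) = (n.choose (k+2) : ℤ) - Paux n k := by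
  have h1 : (k+2)/2 + 1 = (k/2 + 1) + 1 := by omega
  simp only [Paux, h1]
  rw [Finset.sum_range_succ']
  have : ∑ j ∈ Finset.range (k/2+1), ((-1:ℤ))^(j+1) * (n.choose (k+2 - 2*(j+1)))
      = -∑ j ∈ Finset.range (k/2+1), ((-1:ℤ))^j * (n.choose (k - 2*j)) := by
    rw [← Finset.sum_neg_distrib]
    apply Finset.sum_congr rfl
    intro j hj
    simp only [Finset.mem_range] at hj
    have h3 : k+2 - 2*(j+1) = k - 2*j := by omega
    rw [h3]
    ring
  rw [this]
  simp
  ring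

lemma Paux_rec' (m : ℕ) (hm : 1 ≤ m) :
    Paux (2*m+2) m = 2 * Paux (2*m) (m-1) + ((2*m).choose m : ℤ) := by
  obtain ⟨s, rfl⟩ : ∃ s, m = s + 1 := ⟨m - 1, by omega⟩
  have h1 : Paux (2*(s+1)+2) (s+1) = Paux (2*(s+1)+1) (s+1) + Paux (2*(s+1)+1) s := by
    have := Paux_pascal (2*(s+1)+1) s
    simpa using this
  have h2 : Paux (2*(s+1)+1) (s+1) = Paux (2*(s+1)) (s+1) + Paux (2*(s+1)) s := by
    have := Paux_pascal (2*(s+1)) s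
    simpa using this
  rcases Nat.eq_zero_or_pos s with rfl | hs
  · simp only [h1, h2]
    norm_num [Paux]
  · obtain ⟨r, rfl⟩ : ∃ r, s = r + 1 := ⟨s - 1, by omega⟩
    have h3 : Paux (2*(r+1+1)+1) (r+1) = Paux (2*(r+1+1)) (r+1) + Paux (2*(r+1+1)) r := by
      have := Paux_pascal (2*(r+1+1)) r
      simpa using this
    have h4 : Paux (2*(r+1+1)) (r+2) = (((2*(r+1+1)).choose (r+2) : ℤ)) - Paux (2*(r+1+1)) r :=
      Paux_add_two _ r
    have hmm : r + 1 + 1 - 1 = r + 1 := by omega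
    rw [h1, h2, h3, hmm]
    have : r + 1 + 1 = r + 2 := by omega
    rw [this] at h4 ⊢
    rw [h4]
    have : 2 * (r+2) = 2*r+4 := by ring
    rw [this]
    ring

lemma main_int (m : ℕ) (hm : 1 ≤ m) :
    Paux (2*m) (m-1) = ∑ i ∈ Finset.range m, 2^(m-1-i) * ((2*i).choose i : ℤ) := by
  induction m, hm using Nat.le_induction with
  | base => norm_num [Paux]
  | succ n hn ih =>
    have h1 : n + 1 - 1 = n := by omega
    have h2 : 2*(n+1) = 2*n+2 := by ring
    rw [h1, h2, Paux_rec' n hn, ih, Finset.sum_range_succ]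
    have h3 : ∑ i ∈ Finset.range n, (2:ℤ)^(n-i) * ((2*i).choose i : ℤ)
        = ∑ i ∈ Finset.range n, 2 * (2^(n-1-i) * ((2*i).choose i : ℤ)) := by
      apply Finset.sum_congr rfl
      intro i hi
      simp only [Finset.mem_range] at hi
      have : n - i = (n - 1 - i) + 1 := by omega
      rw [this, pow_succ]
      ring
    rw [h3, ← Finset.mul_sum]
    have : n - n = 0 := by omega
    rw [this]
    ring

lemma sin_odd (i : ℕ) : Real.sin ((2*(i:ℝ)+1) * Real.pi / 2) = (-1)^i := by
  have h : (2*(i:ℝ)+1) * Real.pi / 2 = (i:ℝ)*Real.pi + Real.pi/2 := by ring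
  rw [h, Real.sin_add_pi_div_two]
  simpa using Real.cos_nat_mul_pi_sub 0 i

lemma real_part (m : ℕ) (hm : 1 ≤ m) :
    (∑ k ∈ Finset.range (m+1),
        ((2*m).choose k : ℝ) * Real.sin (((m : ℝ) - (k : ℝ)) * Real.pi / 2))
    = (Paux (2*m) (m-1) : ℝ) := by
  rw [← Finset.sum_range_reflect]
  have step1 : ∀ j ∈ Finset.range (m+1),
      ((2*m).choose (m+1-1-j) : ℝ) * Real.sin (((m : ℝ) - ((m+1-1-j : ℕ) : ℝ)) * Real.pi / 2)
      = ((2*m).choose (m-j) : ℝ) * Real.sin ((j : ℝ) * Real.pi / 2) := by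
    intro j hj
    simp only [Finset.mem_range] at hj
    have h1 : m + 1 - 1 - j = m - j := by omega
    have h2 : ((m - j : ℕ) : ℝ) = (m : ℝ) - (j : ℝ) := by
      have : j ≤ m := by omega
      push_cast [this]; ring
    rw [h1, h2]
    ring_nf
  rw [Finset.sum_congr rfl step1]
  rw [← Finset.sum_filter_of_ne (p := fun j => Odd j) ?vanish]
  case vanish =>
    intro j hj hne
    by_contra hodd
    obtain ⟨t, rfl⟩ : ∃ t, j = 2*t := by
      rcases Nat.even_or_odd j with ⟨t, ht⟩ | h
      · exact ⟨t, by omega⟩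
      · exact absurd h hodd
    apply hne
    have : ((2*t : ℕ) : ℝ) * Real.pi / 2 = (t : ℝ) * Real.pi := by push_cast; ring
    rw [this, Real.sin_nat_mul_pi]
    ring
  · rw [Paux]
    push_cast
    refine Finset.sum_nbij' (fun j => j / 2) (fun i => 2*i+1) ?_ ?_ ?_ ?_ ?_
    · intro j hj
      simp only [Finset.mem_filter, Finset.mem_range] at hj ⊢
      obtain ⟨hjm, t, ht⟩ := hj
      omega
    · intro i hi
      simp only [Finset.mem_filter, Finset.mem_range] at hi ⊢
      constructor
      · omega
      · exact ⟨i, by omega⟩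
    · intro j hj
      simp only [Finset.mem_filter, Finset.mem_range] at hj
      obtain ⟨-, t, ht⟩ := hj
      show 2 * (j/2) + 1 = j
      omega
    · intro i hi
      show (2*i+1)/2 = i
      omega
    · intro j hj
      simp only [Finset.mem_filter, Finset.mem_range] at hj
      obtain ⟨hjm, t, ht⟩ := hj
      have h1 : j / 2 = t := by omega
      have h2 : m - j = m - 1 - 2 * (j/2) := by omega
      have h3 : (j : ℝ) = 2*((j/2 : ℕ) : ℝ) + 1 := by
        rw [h1]; exact_mod_cast ht
      rw [h2, h3, sin_odd]
      ring

/-- The combinatorial identity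
`∑_{i=0}^{⌊(m-1)/2⌋} (-1)^i C(2m, m-1-2i) = ∑_{i=0}^{m-1} 2^{m-1-i} C(2i, i)`;
equivalently `∑_{k=0}^{m} C(2m, k) sin((m-k)π/2) = ∑_{k=0}^{m-1} 2^{m-1-k} C(2k, k)`. -/
theorem statement15 (m : ℕ) (hm : 1 ≤ m) :
    ((∑ i ∈ Finset.range ((m-1)/2 + 1), (-1 : ℤ)^i * (2*m).choose (m-1-2*i))
      = ∑ i ∈ Finset.range m, 2^(m-1-i) * ((2*i).choose i : ℤ)) ∧
    ((∑ k ∈ Finset.range (m+1),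
        ((2*m).choose k : ℝ) * Real.sin (((m : ℝ) - (k : ℝ)) * Real.pi / 2))
      = ∑ k ∈ Finset.range m, 2^(m-1-k) * ((2*k).choose k : ℝ)) := by
  constructor
  · exact main_int m hm
  · rw [real_part m hm, main_int m hm]
    push_cast
    rfl

end
end
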